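/- arXiv:1507.05054 — 4 statements merged into one kernel-verified Lean document; each statement's English description precedes it below -/
import Mathlib

section
/- Let M be a matroid on ground set {1,...,n} and let P(M) ⊆ ℝ^n be the convex hull of the indicator vectors e_B of the bases B of M. Then the convex hull of two vertices e_B and e_{B'} forms an edge of P(M) if and only if the symmetric difference of B and B' has exactly two elements (equivalently, B and B' differ by a single basis exchange). -/
open scoped symmDiff

/-- The indicator vector `e_B = Σ_{i∈B} e_i ∈ ℝ^n` of a subset `B ⊆ {1,...,n}`. -/
noncomputable def indVec (n : ℕ) (B : Set (Fin n)) : Fin n → ℝ :=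
  B.indicator 1

/-- The matroid base polytope `P(M)`: the convex hull of the indicator vectors of the
bases of `M`. -/
noncomputable def basePolytope (n : ℕ) (M : Matroid (Fin n)) : Set (Fin n → ℝ) :=
  convexHull ℝ {x | ∃ B, M.IsBase B ∧ x = indVec n B}

open scoped Classical

lemma indVec_apply (n : ℕ) (B : Set (Fin n)) (k : Fin n) :
    indVec n B k = if k ∈ B then 1 else 0 := by
  simp [indVec, Set.indicator_apply]

lemma indVec_inj {n : ℕ} {A A' : Set (Fin n)} (h : indVec n A = indVec n A') : A = A' := by
  ext k
  have hk := congrFun h k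
  simp only [indVec_apply] at hk
  by_cases h1 : k ∈ A <;> by_cases h2 : k ∈ A' <;> simp_all

lemma sum_indVec {n : ℕ} (w : Fin n → ℝ) (A : Set (Fin n)) :
    ∑ k, w k * indVec n A k = ∑ k ∈ A.toFinset, w k := by
  have h : ∀ k, w k * indVec n A k = if k ∈ A.toFinset then w k else 0 := by
    intro k
    simp only [indVec_apply, Set.mem_toFinset]
    split <;> simp
  simp_rw [h]
  rw [Finset.sum_ite_mem, Finset.univ_inter]

/-- The linear functional `x ↦ ∑ k, w k * x k`. -/
noncomputable def dotL {n : ℕ} (w : Fin n → ℝ) : (Fin n → ℝ) →ₗ[ℝ] ℝ where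
  toFun x := ∑ k, w k * x k
  map_add' x y := by simp [mul_add, Finset.sum_add_distrib]
  map_smul' c x := by
    simp only [Pi.smul_apply, smul_eq_mul, RingHom.id_apply, Finset.mul_sum]
    exact Finset.sum_congr rfl fun k _ => by ring

lemma dotL_indVec {n : ℕ} (w : Fin n → ℝ) (A : Set (Fin n)) :
    dotL w (indVec n A) = ∑ k ∈ A.toFinset, w k :=
  sum_indVec w A

/-- Symmetric basis exchange. -/
lemma symm_exchange {n : ℕ} {M : Matroid (Fin n)} (hE : M.E = Set.univ)
    {A B : Set (Fin n)} (hA : M.IsBase A) (hB : M.IsBase B) {x : Fin n}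
    (hxA : x ∈ A) (hxB : x ∉ B) :
    ∃ y, (y ∈ B ∧ y ∉ A) ∧ M.IsBase (insert y (A \ {x})) ∧ M.IsBase (insert x (B \ {y})) := by
  have hgr : ∀ X : Set (Fin n), X ⊆ M.E := fun X => by simp [hE]
  obtain ⟨C, ⟨hCB, hxC⟩, hmin⟩ : ∃ C ∈ {C : Set (Fin n) | C ⊆ B ∧ x ∈ M.closure C},
      ∀ C' ∈ {C : Set (Fin n) | C ⊆ B ∧ x ∈ M.closure C}, id C' ≤ id C → id C = id C' := by
    obtain ⟨C, hC, hm⟩ :=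
      Set.Finite.exists_minimalFor id {C : Set (Fin n) | C ⊆ B ∧ x ∈ M.closure C}
        (Set.toFinite _) ⟨B, subset_rfl, by rw [hB.closure_eq, hE]; trivial⟩
    exact ⟨C, hC, fun C' hC' hle => le_antisymm (hm hC' hle) hle⟩
  have step2 : ∀ y ∈ C, x ∉ M.closure (B \ {y}) := by
    intro y hyC hcon
    have hxCy : x ∉ M.closure (C \ {y}) := by
      intro h
      have heq := hmin (C \ {y}) ⟨Set.diff_subset.trans hCB, h⟩ Set.diff_subset
      simp only [id] at heq
      have : y ∈ C \ {y} := heq ▸ hyC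
      simp at this
    have hxins : x ∈ M.closure (insert y (C \ {y})) := by
      rwa [Set.insert_diff_singleton, Set.insert_eq_self.mpr hyC]
    have hy' := Matroid.closure_exchange ⟨hxins, hxCy⟩
    have hy2 : y ∈ M.closure (insert x (B \ {y})) :=
      M.closure_subset_closure (Set.insert_subset_insert (Set.diff_subset_diff_left hCB)) hy'.1
    rw [Matroid.closure_insert_eq_of_mem_closure hcon] at hy2
    exact hB.indep.notMem_closure_diff_of_mem (hCB hyC) hy2
  have step3 : ¬ C ⊆ M.closure (A \ {x}) := by
    intro h
    exact hA.indep.notMem_closure_diff_of_mem hxA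
      (Matroid.closure_subset_closure_of_subset_closure h hxC)
  obtain ⟨y, hyC, hyA'⟩ := Set.not_subset.mp step3
  have hyB : y ∈ B := hCB hyC
  have hyx : y ≠ x := fun h => hxB (h ▸ hyB)
  have hyA : y ∉ A := fun h => hyA' (M.subset_closure _ (hgr _) ⟨h, by simp [hyx]⟩)
  have hb1 : M.IsBase (insert y (A \ {x})) := by
    apply hA.exchange_isBase_of_indep hyA
    rw [(hA.indep.subset Set.diff_subset).insert_indep_iff_of_notMem (fun h => hyA h.1)]
    exact ⟨by simp [hE], hyA'⟩
  have hb2 : M.IsBase (insert x (B \ {y})) := by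
    apply hB.exchange_isBase_of_indep hxB
    rw [(hB.indep.subset Set.diff_subset).insert_indep_iff_of_notMem (fun h => hxB h.1)]
    exact ⟨by simp [hE], step2 y hyC⟩
  exact ⟨y, ⟨hyB, hyA⟩, hb1, hb2⟩

/-- For distinct bases `B, B'` of a matroid `M` on `{1,...,n}`, the segment between the
vertices `e_B` and `e_{B'}` is an edge (a face, necessarily 1-dimensional as the endpoints
are distinct) of the matroid base polytope `P(M)` if and only if the symmetric difference
of `B` and `B'` has exactly two elements, i.e. `B` and `B'` differ by a single exchange. -/
theorem stmt5 (n : ℕ) (M : Matroid (Fin n)) (hE : M.E = Set.univ)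
    (B B' : Set (Fin n)) (hB : M.IsBase B) (hB' : M.IsBase B') (hne : B ≠ B') :
    IsExtreme ℝ (basePolytope n M) (segment ℝ (indVec n B) (indVec n B')) ↔
      (B ∆ B').ncard = 2 := by
  constructor
  · -- extreme → ncard = 2
    intro hext
    by_contra hcard
    have hBB' : (B \ B').Nonempty := by
      rw [Set.nonempty_iff_ne_empty]
      intro h
      exact hne (hB.eq_of_subset_isBase hB' (by rwa [Set.diff_eq_empty] at h))
    obtain ⟨i, hiB, hiB'⟩ := hBB'
    obtain ⟨j, ⟨hjB', hjB⟩, hb₁, hb₂⟩ := symm_exchange hE hB hB' hiB hiB'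
    have hij : i ≠ j := fun h => hjB (h ▸ hiB)
    set B₁ := insert j (B \ {i}) with hB₁def
    set B₂ := insert i (B' \ {j}) with hB₂def
    have hiB₁ : i ∉ B₁ := by
      simp [hB₁def, hij]
    have hsum : indVec n B₁ + indVec n B₂ = indVec n B + indVec n B' := by
      funext k
      simp only [Pi.add_apply, indVec_apply, hB₁def, hB₂def, Set.mem_insert_iff,
        Set.mem_diff, Set.mem_singleton_iff]
      by_cases hki : k = i <;> by_cases hkj : k = j <;>
        by_cases hkB : k ∈ B <;> by_cases hkB' : k ∈ B' <;> simp_all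
    have hz : (1/2 : ℝ) • indVec n B + (1/2 : ℝ) • indVec n B'
        ∈ segment ℝ (indVec n B) (indVec n B') :=
      ⟨1/2, 1/2, by norm_num, by norm_num, by norm_num, rfl⟩
    have hzopen : (1/2 : ℝ) • indVec n B + (1/2 : ℝ) • indVec n B'
        ∈ openSegment ℝ (indVec n B₁) (indVec n B₂) := by
      refine ⟨1/2, 1/2, by norm_num, by norm_num, by norm_num, ?_⟩
      rw [← smul_add, ← smul_add, hsum]
    have hmem₁ : indVec n B₁ ∈ basePolytope n M :=
      subset_convexHull ℝ _ ⟨B₁, hb₁, rfl⟩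
    have hmem₂ : indVec n B₂ ∈ basePolytope n M :=
      subset_convexHull ℝ _ ⟨B₂, hb₂, rfl⟩
    obtain ⟨a, b, ha, hb, hab, habeq⟩ := hext.2 hmem₁ hmem₂ hz hzopen
    have hvi := congrFun habeq i
    simp only [Pi.add_apply, Pi.smul_apply, indVec_apply, smul_eq_mul] at hvi
    rw [if_pos hiB, if_neg hiB', if_neg hiB₁] at hvi
    have ha0 : a = 0 := by linarith
    have hb1 : b = 1 := by linarith
    have hBeq : B' = B₁ := by
      apply indVec_inj
      rw [← habeq, ha0, hb1]
      simp
    apply hcard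
    have hdiff : B ∆ B' = {i, j} := by
      rw [hBeq, hB₁def]
      ext k
      simp only [Set.mem_symmDiff, Set.mem_insert_iff, Set.mem_diff,
        Set.mem_singleton_iff]
      constructor
      · rintro (⟨hkB, hk⟩ | ⟨(rfl | ⟨hkB, hki⟩), hk2⟩)
        · left
          by_contra hki
          exact hk (Or.inr ⟨hkB, hki⟩)
        · right; rfl
        · exact absurd hkB hk2
      · rintro (rfl | rfl)
        · exact Or.inl ⟨hiB, by simp [hij]⟩
        · exact Or.inr ⟨Or.inl rfl, hjB⟩
    rw [hdiff, Set.ncard_pair hij]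
  · -- ncard = 2 → extreme
    intro hcard
    -- extract the exchange pair
    have hcomm := hB.ncard_diff_comm hB'
    have hsplit : (B ∆ B').ncard = (B \ B').ncard + (B' \ B).ncard := by
      rw [Set.symmDiff_def]
      exact Set.ncard_union_eq disjoint_sdiff_sdiff (Set.toFinite _) (Set.toFinite _)
    have h1 : (B \ B').ncard = 1 := by omega
    have h2 : (B' \ B).ncard = 1 := by omega
    obtain ⟨i, hi⟩ := Set.ncard_eq_one.mp h1
    obtain ⟨j, hj⟩ := Set.ncard_eq_one.mp h2
    have hii : i ∈ B \ B' := by rw [hi]; exact Set.mem_singleton i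
    have hjj : j ∈ B' \ B := by rw [hj]; exact Set.mem_singleton j
    have hiB : i ∈ B := hii.1
    have hiB' : i ∉ B' := hii.2
    have hjB' : j ∈ B' := hjj.1
    have hjB : j ∉ B := hjj.2
    have hij : i ≠ j := fun h => hjB (h ▸ hiB)
    have hBint : B ∩ B' = B \ {i} := by rw [← hi, Set.diff_diff_right_self]
    have hB'int : B ∩ B' = B' \ {j} := by
      rw [← hj, Set.diff_diff_right_self]; exact Set.inter_comm B B'
    have hBeq : B = insert i (B ∩ B') := by
      rw [hBint, Set.insert_diff_singleton, Set.insert_eq_self.mpr hiB]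
    have hB'eq : B' = insert j (B ∩ B') := by
      rw [hB'int, Set.insert_diff_singleton, Set.insert_eq_self.mpr hjB']
    -- the linear functional
    set w : Fin n → ℝ :=
      fun k => (if k ∈ B ∩ B' then (2 : ℝ) else 0) + (if k = i ∨ k = j then (1 : ℝ) else 0)
      with hw
    set r₁ := (B ∩ B').toFinset.card with hr₁
    set m : ℝ := ((2 * r₁ + 1 : ℕ) : ℝ) with hm
    have hval : ∀ A : Set (Fin n),
        dotL w (indVec n A) =
          ((2 * (A.toFinset.filter (· ∈ B ∩ B')).card
            + (A.toFinset.filter (fun k => k = i ∨ k = j)).card : ℕ) : ℝ) := by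
      intro A
      rw [dotL_indVec, hw]
      rw [Finset.sum_add_distrib, ← Finset.sum_filter, ← Finset.sum_filter,
        Finset.sum_const, Finset.sum_const, nsmul_eq_mul, nsmul_eq_mul]
      push_cast
      ring
    -- cardinality facts
    have hBBsub : ∀ A : Set (Fin n),
        A.toFinset.filter (· ∈ B ∩ B') ⊆ (B ∩ B').toFinset := by
      intro A k hk
      rw [Finset.mem_filter] at hk
      simpa [Set.mem_toFinset] using hk.2
    have hcle : ∀ A : Set (Fin n), (A.toFinset.filter (· ∈ B ∩ B')).card ≤ r₁ :=
      fun A => Finset.card_le_card (hBBsub A)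
    have hBer : (B ∩ B').toFinset = B.toFinset.erase i := by
      ext k
      simp only [Set.mem_toFinset, Finset.mem_erase, hBint, Set.mem_diff,
        Set.mem_singleton_iff]
      tauto
    have hrB : B.toFinset.card = r₁ + 1 := by
      rw [hr₁, hBer, ← Finset.card_erase_add_one (by simp [hiB] : i ∈ B.toFinset)]
    have hcardA : ∀ A : Set (Fin n), M.IsBase A → A.toFinset.card = r₁ + 1 := by
      intro A hA
      rw [← hrB, ← Set.ncard_eq_toFinset_card', ← Set.ncard_eq_toFinset_card']
      exact hA.ncard_eq_ncard_of_isBase hB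
    have hsubeq : ∀ A : Set (Fin n), (A.toFinset.filter (· ∈ B ∩ B')).card = r₁ →
        (B ∩ B').toFinset ⊆ A.toFinset := by
      intro A hAc k hk
      have heq := Finset.eq_of_subset_of_card_le (hBBsub A) hAc.ge
      rw [← heq] at hk
      exact Finset.filter_subset _ _ hk
    have hijnot : ∀ k : Fin n, (k = i ∨ k = j) → k ∉ (B ∩ B').toFinset := by
      rintro k (rfl | rfl) hk <;> rw [Set.mem_toFinset] at hk
      · exact hiB' hk.2
      · exact hjB hk.1
    have hd1 : ∀ A : Set (Fin n), M.IsBase A → (B ∩ B').toFinset ⊆ A.toFinset →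
        (A.toFinset.filter (fun k => k = i ∨ k = j)).card ≤ 1 := by
      intro A hA hsub
      have hsub2 : A.toFinset.filter (fun k => k = i ∨ k = j)
          ⊆ A.toFinset \ (B ∩ B').toFinset := by
        intro k hk
        rw [Finset.mem_filter] at hk
        exact Finset.mem_sdiff.mpr ⟨hk.1, hijnot k hk.2⟩
      calc (A.toFinset.filter (fun k => k = i ∨ k = j)).card
          ≤ (A.toFinset \ (B ∩ B').toFinset).card := Finset.card_le_card hsub2
        _ ≤ 1 := by rw [Finset.card_sdiff_of_subset hsub, hcardA A hA]; omega
    have hd2 : ∀ A : Set (Fin n),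
        (A.toFinset.filter (fun k => k = i ∨ k = j)).card ≤ 2 := by
      intro A
      have hsub : A.toFinset.filter (fun k => k = i ∨ k = j) ⊆ {i, j} := by
        intro k hk
        rw [Finset.mem_filter] at hk
        rcases hk.2 with rfl | rfl <;> simp
      exact (Finset.card_le_card hsub).trans ((Finset.card_insert_le _ _).trans (by simp))
    -- the main bound
    have hLe : ∀ A : Set (Fin n), M.IsBase A → dotL w (indVec n A) ≤ m := by
      intro A hA
      rw [hval A, hm]
      rw [Nat.cast_le]
      rcases eq_or_lt_of_le (hcle A) with heq | hlt
      · have := hd1 A hA (hsubeq A heq)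
        omega
      · have := hd2 A
        omega
    have hLeq : ∀ A : Set (Fin n), M.IsBase A → dotL w (indVec n A) = m → A = B ∨ A = B' := by
      intro A hA hAm
      rw [hval A, hm, Nat.cast_inj] at hAm
      have hcA : (A.toFinset.filter (· ∈ B ∩ B')).card = r₁ := by
        have := hd2 A
        have := hcle A
        omega
      have hsub := hsubeq A hcA
      have hdA : (A.toFinset.filter (fun k => k = i ∨ k = j)).card = 1 := by omega
      obtain ⟨y, hy⟩ := Finset.card_eq_one.mp hdA
      have hymem := hy ▸ Finset.mem_singleton_self y
      rw [Finset.mem_filter] at hymem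
      obtain ⟨hyA, hyij⟩ := hymem
      have hyn : y ∉ (B ∩ B').toFinset := hijnot y hyij
      have hins : insert y ((B ∩ B').toFinset) ⊆ A.toFinset :=
        Finset.insert_subset hyA hsub
      have hcard2 : A.toFinset.card ≤ (insert y ((B ∩ B').toFinset)).card := by
        rw [Finset.card_insert_of_notMem hyn, hcardA A hA]
      have hAeq : A = insert y (B ∩ B') := by
        apply Set.toFinset_inj.mp
        rw [Set.toFinset_insert]
        exact (Finset.eq_of_subset_of_card_le hins hcard2).symm
      rcases hyij with rfl | rfl
      · left; rw [hAeq, ← hBeq]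
      · right; rw [hAeq, ← hB'eq]
    -- values at B and B'
    have hcfull : ∀ A : Set (Fin n), B ∩ B' ⊆ A →
        (A.toFinset.filter (· ∈ B ∩ B')).card = r₁ := by
      intro A hsub
      congr 1
      ext k
      simp only [Finset.mem_filter, Set.mem_toFinset]
      exact ⟨fun h => h.2, fun h => ⟨hsub h, h⟩⟩
    have hLB : dotL w (indVec n B) = m := by
      rw [hval B, hm]
      congr 1
      have hdB : B.toFinset.filter (fun k => k = i ∨ k = j) = {i} := by
        ext k
        simp only [Finset.mem_filter, Set.mem_toFinset, Finset.mem_singleton]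
        constructor
        · rintro ⟨hkB, rfl | rfl⟩
          · rfl
          · exact absurd hkB hjB
        · rintro rfl
          exact ⟨hiB, Or.inl rfl⟩
      rw [hcfull B Set.inter_subset_left, hdB, Finset.card_singleton]
    have hLB' : dotL w (indVec n B') = m := by
      rw [hval B', hm]
      congr 1
      have hdB' : B'.toFinset.filter (fun k => k = i ∨ k = j) = {j} := by
        ext k
        simp only [Finset.mem_filter, Set.mem_toFinset, Finset.mem_singleton]
        constructor
        · rintro ⟨hkB, rfl | rfl⟩
          · exact absurd hkB hiB'
          · rfl
        · rintro rfl
          exact ⟨hjB', Or.inr rfl⟩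
      rw [hcfull B' Set.inter_subset_right, hdB', Finset.card_singleton]
    -- the vertex set is finite
    set S : Set (Fin n → ℝ) := {x | ∃ A, M.IsBase A ∧ x = indVec n A} with hS
    have hSfin : S.Finite := by
      have himg : S = indVec n '' {A | M.IsBase A} := by
        ext x
        simp [hS, Set.mem_image, eq_comm]
      rw [himg]
      exact (Set.toFinite _).image _
    -- max value over the polytope
    have hPle : ∀ x ∈ basePolytope n M, dotL w x ≤ m := by
      intro x hx
      have hsub : basePolytope n M ⊆ {x | dotL w x ≤ m} := by
        apply convexHull_min
        · rintro x ⟨A, hA, rfl⟩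
          exact hLe A hA
        · exact convex_halfSpace_le (dotL w).isLinear m
      exact hsub hx
    -- points of the polytope attaining the max lie on the segment
    have hface : ∀ x ∈ basePolytope n M, dotL w x = m →
        x ∈ segment ℝ (indVec n B) (indVec n B') := by
      intro x hx hxm
      have hxT : x ∈ convexHull ℝ (hSfin.toFinset : Set (Fin n → ℝ)) := by
        rwa [Set.Finite.coe_toFinset]
      rw [Finset.convexHull_eq] at hxT
      obtain ⟨ww, hw0, hw1, hxc⟩ := hxT
      have hLsum : dotL w x = ∑ y ∈ hSfin.toFinset, ww y * dotL w y := by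
        rw [← hxc, Finset.centerMass_eq_of_sum_1 _ _ hw1, map_sum]
        simp [smul_eq_mul]
      have hzero : ∑ y ∈ hSfin.toFinset, ww y * (m - dotL w y) = 0 := by
        have hexp : ∑ y ∈ hSfin.toFinset, ww y * (m - dotL w y)
            = (∑ y ∈ hSfin.toFinset, ww y) * m
              - ∑ y ∈ hSfin.toFinset, ww y * dotL w y := by
          rw [Finset.sum_mul, ← Finset.sum_sub_distrib]
          exact Finset.sum_congr rfl fun y _ => by ring
        rw [hexp, hw1, one_mul, ← hLsum, hxm, sub_self]
      have hterm : ∀ y ∈ hSfin.toFinset, ww y * (m - dotL w y) = 0 := by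
        refine (Finset.sum_eq_zero_iff_of_nonneg fun y hy => ?_).mp hzero
        obtain ⟨A, hA, rfl⟩ := hSfin.mem_toFinset.mp hy
        exact mul_nonneg (hw0 _ hy) (sub_nonneg.2 (hLe A hA))
      rw [← convexHull_pair]
      have hxc' : x = (hSfin.toFinset.filter fun y => ww y ≠ 0).centerMass ww id := by
        rw [Finset.centerMass_filter_ne_zero, hxc]
      rw [hxc']
      apply Finset.centerMass_mem_convexHull
      · intro y hy
        exact hw0 y (Finset.mem_filter.mp hy).1
      · rw [Finset.sum_filter_ne_zero, hw1]
        norm_num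
      · intro y hy
        obtain ⟨hyT, hwy⟩ := Finset.mem_filter.mp hy
        obtain ⟨A, hA, rfl⟩ := hSfin.mem_toFinset.mp hyT
        have h0 := hterm _ hyT
        have hAm : dotL w (indVec n A) = m := by
          rcases mul_eq_zero.mp h0 with h | h
          · exact absurd h hwy
          · linarith
        rcases hLeq A hA hAm with rfl | rfl
        · exact Set.mem_insert _ _
        · exact Set.mem_insert_of_mem _ rfl
    -- assemble the extreme set property
    constructor
    · exact segment_subset_convexHull ⟨B, hB, rfl⟩ ⟨B', hB', rfl⟩
    · intro x₁ hx₁ x₂ hx₂ z hz hzopen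
      have hzm : dotL w z = m := by
        obtain ⟨a, b, ha, hb, hab, rfl⟩ := hz
        rw [map_add, map_smul, map_smul, smul_eq_mul, smul_eq_mul, hLB, hLB']
        nlinarith
      obtain ⟨a, b, ha, hb, hab, hzeq⟩ := hzopen
      have hcomb : a * dotL w x₁ + b * dotL w x₂ = m := by
        rw [← hzm, ← hzeq, map_add, map_smul, map_smul, smul_eq_mul, smul_eq_mul]
      have hle1 := hPle _ hx₁
      have hle2 := hPle _ hx₂
      have he1 : dotL w x₁ = m := by nlinarith
      have he2 : dotL w x₂ = m := by nlinarith
      exact hface _ hx₁ he1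
end

section
/- Let λ be a partition with λ_1 ≤ n - r and at most r parts, and let SST(λ, r) be the set of semistandard Young tableaux of shape λ with entries in {1,...,r}. Then the factorial Schur polynomial Σ_{τ ∈ SST(λ,r)} ∏_{(i,j) ∈ λ} (u_{τ(i,j)} - t_{τ(i,j)+j-i}) is a symmetric polynomial in the variables u_1, ..., u_r (with coefficients in ℤ[t_1,...,t_n]). -/
open Finset MvPolynomial

noncomputable section

/-- The cells of the Young diagram of a partition `ν` with at most `p` parts:
pairs `⟨i, j⟩` with `j < ν i` (row `i`, column `j`, both 0-indexed). -/
def cellsOf {p : ℕ} (ν : Fin p → ℕ) : Finset ((_ : Fin p) × ℕ) :=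
  Finset.univ.sigma fun i => Finset.range (ν i)

/-- The semistandard Young tableaux of shape `ν` with entries in `{1,...,r}`
(encoded 0-indexed as `Fin r`): fillings of the cells weakly increasing along rows
and strictly increasing down columns. -/
def SSTFinset {p : ℕ} (ν : Fin p → ℕ) (r : ℕ) :
    Finset ({x // x ∈ cellsOf ν} → Fin r) :=
  Finset.univ.filter fun τ =>
    (∀ c d : {x // x ∈ cellsOf ν}, c.1.1 = d.1.1 → c.1.2 ≤ d.1.2 → τ c ≤ τ d) ∧
    (∀ c d : {x // x ∈ cellsOf ν}, c.1.2 = d.1.2 → c.1.1 < d.1.1 → τ c < τ d)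

/-- The Schur polynomial `s_ν(u_1,...,u_r)`, defined combinatorially as the sum over
semistandard tableaux of shape `ν` with entries in `{1,...,r}` of their monomials. -/
def schurP {p : ℕ} (ν : Fin p → ℕ) (r : ℕ) (R : Type*) [CommSemiring R] :
    MvPolynomial (Fin r) R :=
  ∑ τ ∈ SSTFinset ν r, ∏ c : {x // x ∈ cellsOf ν}, X (τ c)

/-- The finset of partitions with at most `M` parts, each part at most `B`,
encoded as antitone functions `Fin M → ℕ`. -/
def Pars (M B : ℕ) : Finset (Fin M → ℕ) :=
  ((Finset.univ : Finset (Fin M → Fin (B + 1))).image fun f i => (f i : ℕ)).filter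
    fun f => ∀ a b : Fin M, a ≤ b → f b ≤ f a

/-- Pad a partition with at most `p` parts to one with at most `N` parts by appending zeros. -/
def padTo {p : ℕ} (ν : Fin p → ℕ) (N : ℕ) : Fin N → ℕ :=
  fun i => if h : (i : ℕ) < p then ν ⟨i, h⟩ else 0



/-- The factorial Schur polynomial `Σ_{τ ∈ SST(ν,r)} ∏_{(i,j)∈ν} (u_{τ(i,j)} - t_{τ(i,j)+j-i})`,
an element of `ℤ[t][u_1,...,u_r]` where the `t`-variables are indexed by `ℕ`
(the variable `X k : MvPolynomial ℕ ℤ` representing `t_{k+1}`; here entries, rows and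
columns are 0-indexed, so the 0-indexed `t`-subscript of cell `c = (i,j)` with entry `τ c`
is `τ c + j - i`). -/
def factSchur {p : ℕ} (ν : Fin p → ℕ) (r : ℕ) :
    MvPolynomial (Fin r) (MvPolynomial ℕ ℤ) :=
  ∑ τ ∈ SSTFinset ν r, ∏ c : {x // x ∈ cellsOf ν},
    (X (τ c) - C (MvPolynomial.X ((τ c : ℕ) + c.1.2 - (c.1.1 : ℕ))))

namespace FSAux

variable {r : ℕ} {ν : Fin r → ℕ}

abbrev Cell (ν : Fin r → ℕ) := {x // x ∈ cellsOf ν}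

lemma col_lt (c : Cell ν) : c.1.2 < ν c.1.1 := by
  have h := c.2
  simp only [cellsOf, Finset.mem_sigma, Finset.mem_range] at h
  exact h.2

def mkCell (i : Fin r) (j : ℕ) (h : j < ν i) : Cell ν :=
  ⟨⟨i, j⟩, by simpa [cellsOf] using h⟩

@[simp] lemma mkCell_row (i : Fin r) (j : ℕ) (h : j < ν i) : (mkCell i j h).1.1 = i := rfl
@[simp] lemma mkCell_col (i : Fin r) (j : ℕ) (h : j < ν i) : (mkCell i j h).1.2 = j := rfl

lemma cell_ext {c d : Cell ν} (h1 : (c.1.1 : ℕ) = (d.1.1 : ℕ)) (h2 : c.1.2 = d.1.2) :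
    c = d := by
  obtain ⟨⟨i, j⟩, hc⟩ := c
  obtain ⟨⟨i', j'⟩, hd⟩ := d
  simp only at h1 h2
  subst h2
  apply Subtype.ext
  simp [Fin.ext_iff, h1]

/-- Telescoping identity. -/
lemma key_tele {R : Type*} [CommRing R] (x y : R) (τ : ℕ → R) (m : ℕ) :
    (x - y) * ∑ a ∈ range (m + 1), ∏ k ∈ range m, (if k < a then x - τ k else y - τ (k + 1))
      = ∏ k ∈ range (m + 1), (x - τ k) - ∏ k ∈ range (m + 1), (y - τ k) := by
  induction m with
  | zero => simp
  | succ m ih =>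
    have hsplit :
        ∑ a ∈ range (m + 2), ∏ k ∈ range (m + 1), (if k < a then x - τ k else y - τ (k + 1))
          = (∑ a ∈ range (m + 1), ∏ k ∈ range m, (if k < a then x - τ k else y - τ (k + 1)))
              * (y - τ (m + 1))
            + ∏ k ∈ range (m + 1), (x - τ k) := by
      rw [Finset.sum_range_succ]
      congr 1
      · rw [Finset.sum_mul]
        refine Finset.sum_congr rfl fun a ha => ?_
        rw [Finset.prod_range_succ]
        congr 1
        rw [if_neg]
        simp only [Finset.mem_range] at ha
        omega
      · refine Finset.prod_congr rfl fun k hk => ?_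
        rw [if_pos]
        simp only [Finset.mem_range] at hk
        omega
    rw [hsplit, Finset.prod_range_succ (f := fun k => x - τ k) (n := m + 1),
      Finset.prod_range_succ (f := fun k => y - τ k) (n := m + 1)]
    linear_combination (y - τ (m + 1)) * ih

lemma key_symm {R : Type*} [CommRing R] [IsDomain R] {x y : R} (hxy : x ≠ y) (τ : ℕ → R)
    (m : ℕ) :
    ∑ a ∈ range (m + 1), ∏ k ∈ range m, (if k < a then x - τ k else y - τ (k + 1))
      = ∑ a ∈ range (m + 1), ∏ k ∈ range m, (if k < a then y - τ k else x - τ (k + 1)) := by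
  have h1 := key_tele x y τ m
  have h2 := key_tele y x τ m
  apply mul_left_cancel₀ (sub_ne_zero.2 hxy)
  rw [h1]
  linear_combination h2

/-- A finset of naturals closed under betweenness is an interval. -/
lemma nat_interval (t : Finset ℕ)
    (ht : ∀ a ∈ t, ∀ b ∈ t, ∀ x, a ≤ x → x ≤ b → x ∈ t) :
    t = Finset.Ico (sInf (↑t : Set ℕ)) (sInf (↑t : Set ℕ) + t.card) := by
  rcases t.eq_empty_or_nonempty with h | h
  · subst h; simp
  · have hne : (↑t : Set ℕ).Nonempty := by exact_mod_cast h
    have hmin : sInf (↑t : Set ℕ) = t.min' h := by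
      apply le_antisymm
      · exact Nat.sInf_le (by exact_mod_cast t.min'_mem h)
      · exact t.min'_le _ (by exact_mod_cast Nat.sInf_mem hne)
    have hIcc : t = Finset.Icc (t.min' h) (t.max' h) := by
      ext x
      simp only [Finset.mem_Icc]
      exact ⟨fun hx => ⟨t.min'_le x hx, t.le_max' x hx⟩,
        fun hx => ht _ (t.min'_mem h) _ (t.max'_mem h) x hx.1 hx.2⟩
    have hle : t.min' h ≤ t.max' h := t.min'_le _ (t.max'_mem h)
    have hcard : t.card = t.max' h - t.min' h + 1 := by
      conv_lhs => rw [hIcc]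
      rw [Nat.card_Icc]
      omega
    have key : t.min' h + t.card = t.max' h + 1 := by omega
    rw [hmin]
    conv_lhs => rw [hIcc]
    rw [key, Finset.Ico_add_one_right_eq_Icc]

section Comb

attribute [local instance 10] Classical.propDecidable

variable {r : ℕ} {ν : Fin r → ℕ}

section Defs

variable (τ0 : Cell ν → Fin r) (v w : Fin r)

def LockedV (c : Cell ν) : Prop :=
  τ0 c = v ∧ ∃ d : Cell ν, ((d.1.1 : ℕ) = (c.1.1 : ℕ) + 1 ∧ d.1.2 = c.1.2) ∧ τ0 d = w

def LockedW (c : Cell ν) : Prop :=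
  τ0 c = w ∧ ∃ d : Cell ν, ((c.1.1 : ℕ) = (d.1.1 : ℕ) + 1 ∧ d.1.2 = c.1.2) ∧ τ0 d = v

def FreeC (c : Cell ν) : Prop :=
  (τ0 c = v ∨ τ0 c = w) ∧ ¬ LockedV τ0 v w c ∧ ¬ LockedW τ0 v w c

def frameMap : Cell ν → Option (Fin r) :=
  fun c => if FreeC τ0 v w c then none else some (τ0 c)

def frees (i : Fin r) : Finset (Cell ν) :=
  Finset.univ.filter fun c => FreeC τ0 v w c ∧ c.1.1 = i

def mfree (i : Fin r) : ℕ := (frees τ0 v w i).card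

def minc (i : Fin r) : ℕ := sInf (((frees τ0 v w i).image fun c => c.1.2 : Finset ℕ) : Set ℕ)

def reasm (a : Fin r → ℕ) : Cell ν → Fin r := fun c =>
  if FreeC τ0 v w c then (if c.1.2 < minc τ0 v w c.1.1 + a c.1.1 then v else w) else τ0 c

def box : Finset (Fin r → ℕ) := Fintype.piFinset fun i => Finset.range (mfree τ0 v w i + 1)

end Defs

section Struct

variable {τ0 : Cell ν → Fin r} {v w : Fin r}

section Small
variable (hw : (w : ℕ) = (v : ℕ) + 1)
include hw

lemma vw_ne : v ≠ w := by
  intro h; rw [h] at hw; omega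

lemma val_between {a : Fin r} (h1 : (v : ℕ) ≤ (a : ℕ)) (h2 : (a : ℕ) ≤ (w : ℕ)) :
    a = v ∨ a = w := by
  rcases Nat.lt_or_ge (a : ℕ) (w : ℕ) with h | h
  · left; apply Fin.ext; omega
  · right; apply Fin.ext; omega

end Small

variable (hν : Antitone ν) (hw : (w : ℕ) = (v : ℕ) + 1)
variable (hrow : ∀ c d : Cell ν, c.1.1 = d.1.1 → c.1.2 ≤ d.1.2 → τ0 c ≤ τ0 d)
variable (hcol : ∀ c d : Cell ν, c.1.2 = d.1.2 → c.1.1 < d.1.1 → τ0 c < τ0 d)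

include hν hw hrow hcol

/-- No free cell strictly left of a `LockedV` cell in the same row. -/
lemma free_lt_lockedV {c d : Cell ν} (hf : FreeC τ0 v w c) (hl : LockedV τ0 v w d)
    (hre : (c.1.1 : ℕ) = (d.1.1 : ℕ)) (hce : c.1.2 < d.1.2) : False := by
  obtain ⟨hdv, e, ⟨he1, he2⟩, he3⟩ := hl
  have hcr : c.1.2 < ν e.1.1 := lt_of_lt_of_le (lt_of_lt_of_le hce (le_of_eq he2.symm))
    (le_of_lt (col_lt e))
  set b : Cell ν := mkCell e.1.1 c.1.2 hcr with hb
  have hbe : τ0 b ≤ τ0 e := hrow b e rfl (by simpa [hb, he2] using le_of_lt hce)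
  have hcb : τ0 c < τ0 b := by
    refine hcol c b rfl ?_
    rw [Fin.lt_def]
    simp only [hb, mkCell_row]
    omega
  rcases hf.1 with h | h
  · have hbw : τ0 b = w := by
      have h1 : (v : ℕ) < (τ0 b : ℕ) := by rw [← h]; exact hcb
      have h2 : (τ0 b : ℕ) ≤ (w : ℕ) := by rw [← he3]; exact hbe
      apply Fin.ext; omega
    exact hf.2.1 ⟨h, b, ⟨by simp only [hb, mkCell_row]; omega, rfl⟩, hbw⟩
  · rw [h] at hcb
    rw [he3] at hbe
    exact absurd hbe (not_le.2 hcb)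

/-- No `LockedW` cell strictly left of a free cell in the same row. -/
lemma lockedW_lt_free {c d : Cell ν} (hl : LockedW τ0 v w c) (hf : FreeC τ0 v w d)
    (hre : (c.1.1 : ℕ) = (d.1.1 : ℕ)) (hce : c.1.2 < d.1.2) : False := by
  obtain ⟨hcw, e, ⟨he1, he2⟩, he3⟩ := hl
  have hdr : d.1.2 < ν e.1.1 := by
    refine lt_of_lt_of_le (col_lt d) (hν ?_)
    rw [Fin.le_def]; omega
  set u : Cell ν := mkCell e.1.1 d.1.2 hdr with hu
  have heu : τ0 e ≤ τ0 u := hrow e u rfl (by simp only [hu, mkCell_col, he2]; omega)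
  have hud : τ0 u < τ0 d := by
    refine hcol u d rfl ?_
    rw [Fin.lt_def]
    simp only [hu, mkCell_row]
    omega
  have hdle : (τ0 d : ℕ) ≤ (w : ℕ) := by
    rcases hf.1 with h | h <;> rw [h] <;> omega
  have huv : τ0 u = v := by
    have h1 : (v : ℕ) ≤ (τ0 u : ℕ) := by rw [← he3]; exact heu
    have h2 : (τ0 u : ℕ) < (τ0 d : ℕ) := hud
    apply Fin.ext; omega
  have hdw : τ0 d = w := by
    apply Fin.ext
    have h2 : (τ0 u : ℕ) < (τ0 d : ℕ) := hud
    have h1 : (v : ℕ) ≤ (τ0 u : ℕ) := by rw [← huv]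
    omega
  exact hf.2.2 ⟨hdw, u, ⟨by simp only [hu, mkCell_row]; omega, rfl⟩, huv⟩

/-- Freeness is closed between two free cells of the same row. -/
lemma free_between {c d e : Cell ν} (hfc : FreeC τ0 v w c) (hfd : FreeC τ0 v w d)
    (hce : (c.1.1 : ℕ) = (e.1.1 : ℕ)) (hde : (d.1.1 : ℕ) = (e.1.1 : ℕ))
    (h1 : c.1.2 ≤ e.1.2) (h2 : e.1.2 ≤ d.1.2) : FreeC τ0 v w e := by
  have hcv : (v : ℕ) ≤ (τ0 c : ℕ) := by rcases hfc.1 with h | h <;> rw [h] <;> omega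
  have hdw : (τ0 d : ℕ) ≤ (w : ℕ) := by rcases hfd.1 with h | h <;> rw [h] <;> omega
  have hle1 : τ0 c ≤ τ0 e := hrow c e (Fin.ext hce) h1
  have hle2 : τ0 e ≤ τ0 d := hrow e d (Fin.ext (hde.symm ▸ hce ▸ rfl : (e.1.1 : ℕ) = (d.1.1 : ℕ))) h2
  have hvw : τ0 e = v ∨ τ0 e = w := by
    apply val_between hw
    · exact le_trans hcv hle1
    · exact le_trans hle2 hdw
  refine ⟨hvw, fun hL => ?_, fun hL => ?_⟩
  · rcases Nat.lt_or_ge c.1.2 e.1.2 with h | h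
    · exact free_lt_lockedV hν hw hrow hcol hfc hL hce h
    · have : c = e := cell_ext hce (le_antisymm h1 h)
      exact hfc.2.1 (this ▸ hL)
  · rcases Nat.lt_or_ge e.1.2 d.1.2 with h | h
    · exact lockedW_lt_free hν hw hrow hcol hL hfd
        (by omega : (e.1.1 : ℕ) = (d.1.1 : ℕ)) h
    · have : e = d := cell_ext (by omega) (le_antisymm h2 h)
      exact hfd.2.2 (this ▸ hL)

end Struct


section Reasm

variable {τ0 : Cell ν → Fin r} {v w : Fin r}

lemma reasm_nonfree (a : Fin r → ℕ) {c : Cell ν} (h : ¬ FreeC τ0 v w c) :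
    reasm τ0 v w a c = τ0 c := by simp [reasm, h]

lemma reasm_free_vw (a : Fin r → ℕ) {c : Cell ν} (h : FreeC τ0 v w c) :
    reasm τ0 v w a c = v ∨ reasm τ0 v w a c = w := by
  unfold reasm
  rw [if_pos h]
  split_ifs <;> simp

section NF
variable (hw : (w : ℕ) = (v : ℕ) + 1)
include hw

lemma nonfree_v {c : Cell ν} (h : ¬ FreeC τ0 v w c) (hv : τ0 c = v) :
    LockedV τ0 v w c := by
  by_contra hLV
  exact h ⟨Or.inl hv, hLV, fun hLW => vw_ne hw (hv.symm.trans hLW.1)⟩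

lemma nonfree_w {c : Cell ν} (h : ¬ FreeC τ0 v w c) (hvv : τ0 c = w) :
    LockedW τ0 v w c := by
  by_contra hLW
  exact h ⟨Or.inr hvv, fun hLV => vw_ne hw (hLV.1.symm.trans hvv), hLW⟩

end NF

variable (hν : Antitone ν) (hw : (w : ℕ) = (v : ℕ) + 1)
variable (hrow : ∀ c d : Cell ν, c.1.1 = d.1.1 → c.1.2 ≤ d.1.2 → τ0 c ≤ τ0 d)
variable (hcol : ∀ c d : Cell ν, c.1.2 = d.1.2 → c.1.1 < d.1.1 → τ0 c < τ0 d)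

include hν hw hrow hcol

lemma reasm_row (a : Fin r → ℕ) (c d : Cell ν) (hr : c.1.1 = d.1.1) (hcle : c.1.2 ≤ d.1.2) :
    reasm τ0 v w a c ≤ reasm τ0 v w a d := by
  by_cases hc : FreeC τ0 v w c <;> by_cases hd : FreeC τ0 v w d
  · -- both free
    unfold reasm
    rw [if_pos hc, if_pos hd, ← hr]
    split_ifs with h1 h2 h2
    · exact le_refl _
    · rw [Fin.le_def]; omega
    · omega
    · exact le_refl _
  · -- c free, d non-free
    have hdnv : τ0 d ≠ v := by
      intro hdveq
      have hLV : LockedV τ0 v w d := nonfree_v hw hd hdveq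
      rcases Nat.lt_or_ge c.1.2 d.1.2 with h | h
      · exact free_lt_lockedV hν hw hrow hcol hc hLV (congrArg Fin.val hr) h
      · have : c = d := cell_ext (congrArg Fin.val hr) (le_antisymm hcle h)
        exact hc.2.1 (this ▸ hLV)
    have h1 : (v : ℕ) ≤ (τ0 c : ℕ) := by rcases hc.1 with h | h <;> rw [h] <;> omega
    have h2 : (τ0 c : ℕ) ≤ (τ0 d : ℕ) := hrow c d hr hcle
    have h3 : (τ0 d : ℕ) ≠ (v : ℕ) := fun h => hdnv (Fin.ext h)
    have h4 : (reasm τ0 v w a c : ℕ) ≤ (w : ℕ) := by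
      rcases reasm_free_vw a hc with h | h <;> rw [h] <;> omega
    rw [reasm_nonfree a hd, Fin.le_def]
    omega
  · -- c non-free, d free
    have hcnw : τ0 c ≠ w := by
      intro hceq
      have hLW : LockedW τ0 v w c := nonfree_w hw hc hceq
      rcases Nat.lt_or_ge c.1.2 d.1.2 with h | h
      · exact lockedW_lt_free hν hw hrow hcol hLW hd (congrArg Fin.val hr) h
      · have : c = d := cell_ext (congrArg Fin.val hr) (le_antisymm hcle h)
        exact hd.2.2 (this ▸ hLW)
    have h1 : (τ0 d : ℕ) ≤ (w : ℕ) := by rcases hd.1 with h | h <;> rw [h] <;> omega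
    have h2 : (τ0 c : ℕ) ≤ (τ0 d : ℕ) := hrow c d hr hcle
    have h3 : (τ0 c : ℕ) ≠ (w : ℕ) := fun h => hcnw (Fin.ext h)
    have h4 : (v : ℕ) ≤ (reasm τ0 v w a d : ℕ) := by
      rcases reasm_free_vw a hd with h | h <;> rw [h] <;> omega
    rw [reasm_nonfree a hc, Fin.le_def]
    omega
  · rw [reasm_nonfree a hc, reasm_nonfree a hd]
    exact hrow c d hr hcle

lemma reasm_col (a : Fin r → ℕ) (c d : Cell ν) (hce : c.1.2 = d.1.2) (hrlt : c.1.1 < d.1.1) :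
    reasm τ0 v w a c < reasm τ0 v w a d := by
  have h1 : τ0 c < τ0 d := hcol c d hce hrlt
  have hrltn : (c.1.1 : ℕ) < (d.1.1 : ℕ) := hrlt
  by_cases hc : FreeC τ0 v w c <;> by_cases hd : FreeC τ0 v w d
  · -- both free : impossible
    exfalso
    have hcv : τ0 c = v := by
      rcases hc.1 with h | h
      · exact h
      · exfalso
        have hh : (τ0 d : ℕ) ≤ (w : ℕ) := by rcases hd.1 with h' | h' <;> rw [h'] <;> omega
        have : (τ0 c : ℕ) < (τ0 d : ℕ) := h1
        rw [h] at this
        omega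
    have hdw : τ0 d = w := by
      rcases hd.1 with h | h
      · exfalso
        have : (τ0 c : ℕ) < (τ0 d : ℕ) := h1
        rw [hcv, h] at this
        omega
      · exact h
    rcases Nat.lt_or_ge ((c.1.1 : ℕ) + 1) (d.1.1 : ℕ) with h | h
    · -- intermediate cell
      have hrr : (c.1.1 : ℕ) + 1 < r := lt_trans h d.1.1.isLt
      have hcl : c.1.2 < ν ⟨(c.1.1 : ℕ) + 1, hrr⟩ := by
        rw [hce]
        refine lt_of_lt_of_le (col_lt d) (hν ?_)
        rw [Fin.le_def]
        simpa using le_of_lt h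
      set e : Cell ν := mkCell ⟨(c.1.1 : ℕ) + 1, hrr⟩ c.1.2 hcl with he
      have l1 : τ0 c < τ0 e := by
        refine hcol c e rfl ?_
        rw [Fin.lt_def]
        simp [he]
      have l2 : τ0 e < τ0 d := by
        refine hcol e d (by simp [he, hce]) ?_
        rw [Fin.lt_def]
        simpa [he] using h
      have n1 : (τ0 c : ℕ) < (τ0 e : ℕ) := l1
      have n2 : (τ0 e : ℕ) < (τ0 d : ℕ) := l2
      rw [hcv] at n1
      rw [hdw] at n2
      omega
    · -- adjacent
      exact hc.2.1 ⟨hcv, d, ⟨by omega, hce.symm⟩, hdw⟩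
  · -- c free, d non-free
    have hdnw : τ0 d ≠ w := by
      intro hdw
      obtain ⟨_, e, ⟨he1, he2⟩, he3⟩ := nonfree_w hw hd hdw
      rcases lt_trichotomy (c.1.1 : ℕ) (e.1.1 : ℕ) with h | h | h
      · have hlt : τ0 c < τ0 e := by
          refine hcol c e (by rw [hce, ← he2]) ?_
          rwa [Fin.lt_def]
        have : (τ0 c : ℕ) < (τ0 e : ℕ) := hlt
        have hcv : (v : ℕ) ≤ (τ0 c : ℕ) := by rcases hc.1 with h' | h' <;> rw [h'] <;> omega
        rw [he3] at this
        omega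
      · have : c = e := cell_ext h (by rw [hce, ← he2])
        have hcv : τ0 c = v := by rw [this, he3]
        exact hc.2.1 ⟨hcv, d, ⟨by omega, hce.symm⟩, hdw⟩
      · omega
    have h2 : (v : ℕ) ≤ (τ0 c : ℕ) := by rcases hc.1 with h | h <;> rw [h] <;> omega
    have h3 : (τ0 c : ℕ) < (τ0 d : ℕ) := h1
    have h4 : (τ0 d : ℕ) ≠ (w : ℕ) := fun h => hdnw (Fin.ext h)
    have h5 : (reasm τ0 v w a c : ℕ) ≤ (w : ℕ) := by
      rcases reasm_free_vw a hc with h | h <;> rw [h] <;> omega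
    rw [reasm_nonfree a hd, Fin.lt_def]
    omega
  · -- c non-free, d free
    have hcnv : τ0 c ≠ v := by
      intro hcv
      obtain ⟨_, e, ⟨he1, he2⟩, he3⟩ := nonfree_v hw hc hcv
      rcases lt_trichotomy (e.1.1 : ℕ) (d.1.1 : ℕ) with h | h | h
      · have hlt : τ0 e < τ0 d := by
          refine hcol e d (by rw [he2, hce]) ?_
          rwa [Fin.lt_def]
        have h6 : (τ0 e : ℕ) < (τ0 d : ℕ) := hlt
        have h7 : (τ0 d : ℕ) ≤ (w : ℕ) := by rcases hd.1 with h' | h' <;> rw [h'] <;> omega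
        rw [he3] at h6
        omega
      · have : e = d := cell_ext h (by rw [he2, hce])
        have hdw : τ0 d = w := by rw [← this, he3]
        exact hd.2.2 ⟨hdw, c, ⟨by omega, hce⟩, hcv⟩
      · omega
    have h2 : (τ0 d : ℕ) ≤ (w : ℕ) := by rcases hd.1 with h | h <;> rw [h] <;> omega
    have h3 : (τ0 c : ℕ) < (τ0 d : ℕ) := h1
    have h4 : (τ0 c : ℕ) ≠ (v : ℕ) := fun h => hcnv (Fin.ext h)
    have h5 : (v : ℕ) ≤ (reasm τ0 v w a d : ℕ) := by
      rcases reasm_free_vw a hd with h | h <;> rw [h] <;> omega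
    rw [reasm_nonfree a hc, Fin.lt_def]
    omega
  · rw [reasm_nonfree a hc, reasm_nonfree a hd]
    exact h1

lemma reasm_frame (a : Fin r → ℕ) :
    frameMap (reasm τ0 v w a) v w = frameMap τ0 v w := by
  have P1 : ∀ c : Cell ν, ¬ FreeC τ0 v w c → ¬ FreeC (reasm τ0 v w a) v w c := by
    intro c hnf
    by_cases hv : τ0 c = v
    · obtain ⟨_, d, ⟨hd1, hd2⟩, hd3⟩ := nonfree_v hw hnf hv
      have hdnf : ¬ FreeC τ0 v w d := fun F => F.2.2 ⟨hd3, c, ⟨hd1, hd2.symm⟩, hv⟩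
      intro F
      exact F.2.1 ⟨(reasm_nonfree a hnf).trans hv, d, ⟨hd1, hd2⟩,
        (reasm_nonfree a hdnf).trans hd3⟩
    · by_cases hww : τ0 c = w
      · obtain ⟨_, d, ⟨hd1, hd2⟩, hd3⟩ := nonfree_w hw hnf hww
        have hdnf : ¬ FreeC τ0 v w d := fun F => F.2.1 ⟨hd3, c, ⟨hd1, hd2.symm⟩, hww⟩
        intro F
        exact F.2.2 ⟨(reasm_nonfree a hnf).trans hww, d, ⟨hd1, hd2⟩,
          (reasm_nonfree a hdnf).trans hd3⟩
      · intro F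
        rcases F.1 with h | h <;> rw [reasm_nonfree a hnf] at h
        · exact hv h
        · exact hww h
  have P2 : ∀ c : Cell ν, FreeC τ0 v w c → FreeC (reasm τ0 v w a) v w c := by
    intro c hc
    refine ⟨reasm_free_vw a hc, ?_, ?_⟩
    · rintro ⟨hv', d, ⟨hd1, hd2⟩, hdw'⟩
      by_cases hFd : FreeC τ0 v w d
      · have h1 : τ0 c < τ0 d := hcol c d hd2.symm (by rw [Fin.lt_def]; omega)
        have hcv : τ0 c = v := by
          have n1 : (τ0 c : ℕ) < (τ0 d : ℕ) := h1
          have n2 : (τ0 d : ℕ) ≤ (w : ℕ) := by rcases hFd.1 with h | h <;> rw [h] <;> omega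
          have n3 : (v : ℕ) ≤ (τ0 c : ℕ) := by rcases hc.1 with h | h <;> rw [h] <;> omega
          apply Fin.ext; omega
        have hdw : τ0 d = w := by
          have n1 : (τ0 c : ℕ) < (τ0 d : ℕ) := h1
          have n3 : (v : ℕ) ≤ (τ0 c : ℕ) := by rw [hcv]
          have n2 : (τ0 d : ℕ) ≤ (w : ℕ) := by rcases hFd.1 with h | h <;> rw [h] <;> omega
          apply Fin.ext; omega
        exact hc.2.1 ⟨hcv, d, ⟨hd1, hd2⟩, hdw⟩
      · have hdw : τ0 d = w := by rw [← reasm_nonfree a hFd]; exact hdw'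
        obtain ⟨_, e, ⟨he1, he2⟩, he3⟩ := nonfree_w hw hFd hdw
        have : e = c := cell_ext (by omega) (he2.trans hd2)
        exact hc.2.1 ⟨by rw [← this, he3], d, ⟨hd1, hd2⟩, hdw⟩
    · rintro ⟨hw', d, ⟨hd1, hd2⟩, hdv'⟩
      by_cases hFd : FreeC τ0 v w d
      · have h1 : τ0 d < τ0 c := hcol d c hd2 (by rw [Fin.lt_def]; omega)
        have hdv : τ0 d = v := by
          have n1 : (τ0 d : ℕ) < (τ0 c : ℕ) := h1
          have n2 : (τ0 c : ℕ) ≤ (w : ℕ) := by rcases hc.1 with h | h <;> rw [h] <;> omega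
          have n3 : (v : ℕ) ≤ (τ0 d : ℕ) := by rcases hFd.1 with h | h <;> rw [h] <;> omega
          apply Fin.ext; omega
        have hcw : τ0 c = w := by
          have n1 : (τ0 d : ℕ) < (τ0 c : ℕ) := h1
          have n2 : (τ0 c : ℕ) ≤ (w : ℕ) := by rcases hc.1 with h | h <;> rw [h] <;> omega
          have n3 : (v : ℕ) ≤ (τ0 d : ℕ) := by rw [hdv]
          apply Fin.ext; omega
        exact hc.2.2 ⟨hcw, d, ⟨hd1, hd2⟩, hdv⟩
      · have hdv : τ0 d = v := by rw [← reasm_nonfree a hFd]; exact hdv'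
        obtain ⟨_, e, ⟨he1, he2⟩, he3⟩ := nonfree_v hw hFd hdv
        have : e = c := cell_ext (by omega) (he2.trans hd2)
        exact hc.2.2 ⟨by rw [← this, he3], d, ⟨hd1, hd2⟩, hdv⟩
  funext c
  unfold frameMap
  by_cases h : FreeC τ0 v w c
  · rw [if_pos h, if_pos (P2 c h)]
  · rw [if_neg h, if_neg (P1 c h), reasm_nonfree a h]

end Reasm


section Count

variable {τ0 : Cell ν → Fin r} {v w : Fin r}

lemma mem_frees {c : Cell ν} {i : Fin r} :
    c ∈ frees τ0 v w i ↔ FreeC τ0 v w c ∧ c.1.1 = i := by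
  simp [frees]

lemma frees_injOn (i : Fin r) :
    Set.InjOn (fun c : Cell ν => c.1.2) ↑(frees τ0 v w i) := by
  intro c hc d hd h
  rw [Finset.mem_coe, mem_frees] at hc hd
  exact cell_ext (by rw [hc.2, hd.2]) h

variable (hν : Antitone ν) (hw : (w : ℕ) = (v : ℕ) + 1)
variable (hrow : ∀ c d : Cell ν, c.1.1 = d.1.1 → c.1.2 ≤ d.1.2 → τ0 c ≤ τ0 d)
variable (hcol : ∀ c d : Cell ν, c.1.2 = d.1.2 → c.1.1 < d.1.1 → τ0 c < τ0 d)

include hν hw hrow hcol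

lemma cols_eq (i : Fin r) :
    (frees τ0 v w i).image (fun c => c.1.2)
      = Finset.Ico (minc τ0 v w i) (minc τ0 v w i + mfree τ0 v w i) := by
  have hcard : ((frees τ0 v w i).image fun c => c.1.2).card = mfree τ0 v w i :=
    Finset.card_image_of_injOn (frees_injOn i)
  have h := nat_interval ((frees τ0 v w i).image fun c => c.1.2) ?_
  · rw [hcard] at h
    exact h
  · intro a ha b hb x hax hxb
    simp only [Finset.mem_image] at ha hb ⊢
    obtain ⟨c, hc, rfl⟩ := ha
    obtain ⟨d, hd, rfl⟩ := hb
    rw [mem_frees] at hc hd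
    have hxlt : x < ν i := by
      refine lt_of_le_of_lt hxb ?_
      rw [← hd.2]; exact col_lt d
    refine ⟨mkCell i x hxlt, ?_, rfl⟩
    rw [mem_frees]
    refine ⟨free_between hν hw hrow hcol hc.1 hd.1 ?_ ?_ hax hxb, rfl⟩
    · rw [hc.2]; rfl
    · rw [hd.2]; rfl

lemma col_mem_Ico {i : Fin r} {c : Cell ν} (hc : c ∈ frees τ0 v w i) :
    minc τ0 v w i ≤ c.1.2 ∧ c.1.2 < minc τ0 v w i + mfree τ0 v w i := by
  have : c.1.2 ∈ (frees τ0 v w i).image (fun c => c.1.2) :=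
    Finset.mem_image_of_mem _ hc
  rw [cols_eq hν hw hrow hcol, Finset.mem_Ico] at this
  exact this

lemma card_col_lt (i : Fin r) (j : ℕ) (hj1 : minc τ0 v w i ≤ j)
    (hj2 : j ≤ minc τ0 v w i + mfree τ0 v w i) :
    ((frees τ0 v w i).filter fun c => c.1.2 < j).card = j - minc τ0 v w i := by
  have h1 : (((frees τ0 v w i).filter fun c => c.1.2 < j).image fun c => c.1.2)
      = Finset.Ico (minc τ0 v w i) j := by
    rw [← Finset.filter_image (f := fun c : Cell ν => c.1.2) (p := fun x => x < j), cols_eq hν hw hrow hcol]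
    ext x
    simp only [Finset.mem_filter, Finset.mem_Ico]
    omega
  have h2 : (((frees τ0 v w i).filter fun c => c.1.2 < j).image fun c => c.1.2).card
      = ((frees τ0 v w i).filter fun c => c.1.2 < j).card := by
    apply Finset.card_image_of_injOn
    exact (frees_injOn i).mono (by exact_mod_cast Finset.filter_subset _ _)
  rw [← h2, h1, Nat.card_Ico]

end Count


section Fiber

variable {τ0 : Cell ν → Fin r} {v w : Fin r}

def cntv (τ0 : Cell ν → Fin r) (v w : Fin r) (τ : Cell ν → Fin r) : Fin r → ℕ :=
  fun i => ((frees τ0 v w i).filter fun c => τ c = v).card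

lemma frame_free_iff {τ : Cell ν → Fin r}
    (hfr : frameMap τ v w = frameMap τ0 v w) (c : Cell ν) :
    FreeC τ v w c ↔ FreeC τ0 v w c := by
  have h := congrFun hfr c
  unfold frameMap at h
  constructor
  · intro hx
    by_contra h2
    rw [if_pos hx, if_neg h2] at h
    cases h
  · intro hx
    by_contra h2
    rw [if_neg h2, if_pos hx] at h
    cases h

lemma frame_val {τ : Cell ν → Fin r}
    (hfr : frameMap τ v w = frameMap τ0 v w) (c : Cell ν) (h2 : ¬ FreeC τ0 v w c) :
    τ c = τ0 c := by
  have h := congrFun hfr c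
  unfold frameMap at h
  have h1 : ¬ FreeC τ v w c := fun hx => h2 ((frame_free_iff hfr c).1 hx)
  rw [if_neg h1, if_neg h2] at h
  exact Option.some.inj h

lemma cntv_mem_box (τ : Cell ν → Fin r) : cntv τ0 v w τ ∈ box τ0 v w := by
  rw [box, Fintype.mem_piFinset]
  intro i
  rw [Finset.mem_range]
  exact Nat.lt_succ_of_le (Finset.card_filter_le _ _)

lemma mem_SST {τ : Cell ν → Fin r} :
    τ ∈ SSTFinset ν r ↔
      (∀ c d : Cell ν, c.1.1 = d.1.1 → c.1.2 ≤ d.1.2 → τ c ≤ τ d) ∧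
      (∀ c d : Cell ν, c.1.2 = d.1.2 → c.1.1 < d.1.1 → τ c < τ d) := by
  simp [SSTFinset]

variable (hν : Antitone ν) (hw : (w : ℕ) = (v : ℕ) + 1)
variable (hrow : ∀ c d : Cell ν, c.1.1 = d.1.1 → c.1.2 ≤ d.1.2 → τ0 c ≤ τ0 d)
variable (hcol : ∀ c d : Cell ν, c.1.2 = d.1.2 → c.1.1 < d.1.1 → τ0 c < τ0 d)

include hν hw hrow hcol

lemma fiber_to_reasm {τ : Cell ν → Fin r}
    (hrowτ : ∀ c d : Cell ν, c.1.1 = d.1.1 → c.1.2 ≤ d.1.2 → τ c ≤ τ d)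
    (hfr : frameMap τ v w = frameMap τ0 v w) :
    τ = reasm τ0 v w (cntv τ0 v w τ) := by
  funext c
  by_cases hF : FreeC τ0 v w c
  · have hci : c ∈ frees τ0 v w c.1.1 := mem_frees.2 ⟨hF, rfl⟩
    have hFτ : FreeC τ v w c := (frame_free_iff hfr c).2 hF
    have hcb := col_mem_Ico hν hw hrow hcol hci
    unfold reasm
    rw [if_pos hF]
    rcases hFτ.1 with hval | hval
    · have hlt : c.1.2 < minc τ0 v w c.1.1 + cntv τ0 v w τ c.1.1 := by
        have hsub : (frees τ0 v w c.1.1).filter (fun d => d.1.2 < c.1.2)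
            ⊆ ((frees τ0 v w c.1.1).filter fun d => τ d = v).erase c := by
          intro d hd
          rw [Finset.mem_filter] at hd
          obtain ⟨hd1, hd2⟩ := hd
          have hdF : FreeC τ0 v w d := (mem_frees.1 hd1).1
          have hdFτ : FreeC τ v w d := (frame_free_iff hfr d).2 hdF
          have hle : τ d ≤ τ c := hrowτ d c (by rw [(mem_frees.1 hd1).2]) (le_of_lt hd2)
          have hdv : τ d = v := by
            rcases hdFτ.1 with h | h
            · exact h
            · exfalso
              have hle' : (τ d : ℕ) ≤ (τ c : ℕ) := hle
              rw [h, hval] at hle'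
              omega
          refine Finset.mem_erase.2 ⟨?_, Finset.mem_filter.2 ⟨hd1, hdv⟩⟩
          intro hdc
          rw [hdc] at hd2
          omega
        have hmem : c ∈ (frees τ0 v w c.1.1).filter fun d => τ d = v :=
          Finset.mem_filter.2 ⟨hci, hval⟩
        have hcard := Finset.card_le_card hsub
        rw [Finset.card_erase_of_mem hmem,
          card_col_lt hν hw hrow hcol c.1.1 c.1.2 hcb.1 (le_of_lt hcb.2)] at hcard
        have hpos : 0 < cntv τ0 v w τ c.1.1 := Finset.card_pos.2 ⟨c, hmem⟩
        have hc2 : c.1.2 - minc τ0 v w c.1.1 ≤ cntv τ0 v w τ c.1.1 - 1 := hcard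
        omega
      rw [if_pos hlt]
      exact hval
    · have hge : ¬ (c.1.2 < minc τ0 v w c.1.1 + cntv τ0 v w τ c.1.1) := by
        have hsub : ((frees τ0 v w c.1.1).filter fun d => τ d = v)
            ⊆ (frees τ0 v w c.1.1).filter fun d => d.1.2 < c.1.2 := by
          intro d hd
          rw [Finset.mem_filter] at hd ⊢
          obtain ⟨hd1, hdv⟩ := hd
          refine ⟨hd1, ?_⟩
          rcases Nat.lt_or_ge d.1.2 c.1.2 with h | h
          · exact h
          · exfalso
            rcases Nat.eq_or_lt_of_le h with h' | h'
            · have : d = c := cell_ext (by rw [(mem_frees.1 hd1).2]) h'.symm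
              rw [this, hval] at hdv
              exact vw_ne hw hdv.symm
            · have hle : τ c ≤ τ d := hrowτ c d (by rw [(mem_frees.1 hd1).2]) (le_of_lt h')
              have hle' : (τ c : ℕ) ≤ (τ d : ℕ) := hle
              rw [hval, hdv] at hle'
              omega
        have hcard := Finset.card_le_card hsub
        rw [card_col_lt hν hw hrow hcol c.1.1 c.1.2 hcb.1 (le_of_lt hcb.2)] at hcard
        have hc2 : cntv τ0 v w τ c.1.1 ≤ c.1.2 - minc τ0 v w c.1.1 := hcard
        omega
      rw [if_neg hge]
      exact hval
  · rw [reasm_nonfree _ hF]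
    exact frame_val hfr c hF

lemma cntv_reasm {a : Fin r → ℕ} (ha : a ∈ box τ0 v w) :
    cntv τ0 v w (reasm τ0 v w a) = a := by
  funext i
  have hai : a i ≤ mfree τ0 v w i := by
    rw [box, Fintype.mem_piFinset] at ha
    have := ha i
    rw [Finset.mem_range] at this
    omega
  have hfe : (frees τ0 v w i).filter (fun c => reasm τ0 v w a c = v)
      = (frees τ0 v w i).filter fun c => c.1.2 < minc τ0 v w i + a i := by
    apply Finset.filter_congr
    intro c hc
    obtain ⟨hF, hi⟩ := mem_frees.1 hc
    unfold reasm
    rw [if_pos hF, hi]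
    split_ifs with h
    · simp [h]
    · simp only [h, iff_false]
      exact fun hh => vw_ne hw hh.symm
  unfold cntv
  rw [hfe, card_col_lt hν hw hrow hcol i _ (Nat.le_add_right _ _) (by omega)]
  omega

lemma fiber_eq (h0 : τ0 ∈ SSTFinset ν r) :
    (SSTFinset ν r).filter (fun τ => frameMap τ v w = frameMap τ0 v w)
      = (box τ0 v w).image (reasm τ0 v w) := by
  ext τ
  simp only [Finset.mem_filter, Finset.mem_image]
  constructor
  · rintro ⟨hSST, hfr⟩
    exact ⟨cntv τ0 v w τ, cntv_mem_box τ,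
      (fiber_to_reasm hν hw hrow hcol (mem_SST.1 hSST).1 hfr).symm⟩
  · rintro ⟨a, ha, rfl⟩
    exact ⟨mem_SST.2 ⟨reasm_row hν hw hrow hcol a, reasm_col hν hw hrow hcol a⟩,
      reasm_frame hν hw hrow hcol a⟩

end Fiber


section Weights

variable {τ0 : Cell ν → Fin r} {v w : Fin r}

def wfac (u : Fin r) (c : Cell ν) : MvPolynomial (Fin r) (MvPolynomial ℕ ℤ) :=
  MvPolynomial.X u - MvPolynomial.C (MvPolynomial.X ((u : ℕ) + c.1.2 - (c.1.1 : ℕ)))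

def wfacs (v w : Fin r) (u : Fin r) (c : Cell ν) :
    MvPolynomial (Fin r) (MvPolynomial ℕ ℤ) :=
  MvPolynomial.X (Equiv.swap v w u)
    - MvPolynomial.C (MvPolynomial.X ((u : ℕ) + c.1.2 - (c.1.1 : ℕ)))

def flipc (τ0 : Cell ν → Fin r) (v w : Fin r) (c : Cell ν) : Cell ν :=
  if h : LockedV τ0 v w c then h.2.choose
  else if h : LockedW τ0 v w c then h.2.choose
  else c

variable (hw : (w : ℕ) = (v : ℕ) + 1)
include hw

lemma flip_of_lockedV {c : Cell ν} (h : LockedV τ0 v w c) :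
    ((flipc τ0 v w c).1.1 : ℕ) = (c.1.1 : ℕ) + 1 ∧ (flipc τ0 v w c).1.2 = c.1.2 ∧
      τ0 (flipc τ0 v w c) = w ∧ LockedW τ0 v w (flipc τ0 v w c) := by
  have hfl : flipc τ0 v w c = h.2.choose := dif_pos h
  obtain ⟨⟨h1, h2⟩, h3⟩ := h.2.choose_spec
  rw [hfl]
  exact ⟨h1, h2, h3, ⟨h3, c, ⟨h1, h2.symm⟩, h.1⟩⟩

lemma flip_of_lockedW {c : Cell ν} (h : LockedW τ0 v w c) :
    (c.1.1 : ℕ) = ((flipc τ0 v w c).1.1 : ℕ) + 1 ∧ (flipc τ0 v w c).1.2 = c.1.2 ∧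
      τ0 (flipc τ0 v w c) = v ∧ LockedV τ0 v w (flipc τ0 v w c) := by
  have hnV : ¬ LockedV τ0 v w c := fun h' => vw_ne hw (h'.1.symm.trans h.1)
  have hfl : flipc τ0 v w c = h.2.choose := by
    rw [flipc, dif_neg hnV, dif_pos h]
  obtain ⟨⟨h1, h2⟩, h3⟩ := h.2.choose_spec
  rw [hfl]
  exact ⟨h1, h2, h3, ⟨h3, c, ⟨h1, h2.symm⟩, h.1⟩⟩

lemma flip_of_other {c : Cell ν} (h1 : ¬ LockedV τ0 v w c) (h2 : ¬ LockedW τ0 v w c) :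
    flipc τ0 v w c = c := by
  rw [flipc, dif_neg h1, dif_neg h2]

lemma locked_of_nonfree {c : Cell ν} (hnf : ¬ FreeC τ0 v w c) :
    (τ0 c ≠ v ∧ τ0 c ≠ w) ∨ LockedV τ0 v w c ∨ LockedW τ0 v w c := by
  by_cases hv : τ0 c = v
  · exact Or.inr (Or.inl (nonfree_v hw hnf hv))
  · by_cases hww : τ0 c = w
    · exact Or.inr (Or.inr (nonfree_w hw hnf hww))
    · exact Or.inl ⟨hv, hww⟩

lemma flip_nonfree {c : Cell ν} (hnf : ¬ FreeC τ0 v w c) :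
    ¬ FreeC τ0 v w (flipc τ0 v w c) := by
  rcases locked_of_nonfree hw hnf with ⟨h1, h2⟩ | h | h
  · rw [flip_of_other hw (fun h => h1 h.1) (fun h => h2 h.1)]
    exact hnf
  · exact fun F => F.2.2 (flip_of_lockedV hw h).2.2.2
  · exact fun F => F.2.1 (flip_of_lockedW hw h).2.2.2

lemma flip_flip {c : Cell ν} (hnf : ¬ FreeC τ0 v w c) :
    flipc τ0 v w (flipc τ0 v w c) = c := by
  rcases locked_of_nonfree hw hnf with ⟨h1, h2⟩ | h | h
  · rw [flip_of_other hw (fun h => h1 h.1) (fun h => h2 h.1),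
      flip_of_other hw (fun h => h1 h.1) (fun h => h2 h.1)]
  · obtain ⟨g1, g2, g3, gW⟩ := flip_of_lockedV hw h
    obtain ⟨f1, f2, f3, _⟩ := flip_of_lockedW hw gW
    exact cell_ext (by omega) (f2.trans g2)
  · obtain ⟨g1, g2, g3, gV⟩ := flip_of_lockedW hw h
    obtain ⟨f1, f2, f3, _⟩ := flip_of_lockedV hw gV
    exact cell_ext (by omega) (f2.trans g2)

lemma flip_wfac {c : Cell ν} (hnf : ¬ FreeC τ0 v w c) :
    wfacs v w (τ0 c) c = wfac (τ0 (flipc τ0 v w c)) (flipc τ0 v w c) := by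
  rcases locked_of_nonfree hw hnf with ⟨h1, h2⟩ | h | h
  · rw [flip_of_other hw (fun h => h1 h.1) (fun h => h2 h.1), wfacs, wfac,
      Equiv.swap_apply_of_ne_of_ne h1 h2]
  · obtain ⟨g1, g2, g3, _⟩ := flip_of_lockedV hw h
    rw [wfacs, wfac, h.1, g3, Equiv.swap_apply_left]
    congr 3
    omega
  · obtain ⟨g1, g2, g3, _⟩ := flip_of_lockedW hw h
    rw [wfacs, wfac, h.1, g3, Equiv.swap_apply_right]
    congr 3
    omega

lemma Wout_eq :
    ∏ c ∈ Finset.univ.filter (fun c => ¬ FreeC τ0 v w c), wfacs v w (τ0 c) c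
      = ∏ c ∈ Finset.univ.filter (fun c => ¬ FreeC τ0 v w c), wfac (τ0 c) c := by
  refine Finset.prod_nbij' (flipc τ0 v w) (flipc τ0 v w) ?_ ?_ ?_ ?_ ?_
  · intro c hc
    rw [Finset.mem_filter] at hc ⊢
    exact ⟨Finset.mem_univ _, flip_nonfree hw hc.2⟩
  · intro c hc
    rw [Finset.mem_filter] at hc ⊢
    exact ⟨Finset.mem_univ _, flip_nonfree hw hc.2⟩
  · intro c hc
    rw [Finset.mem_filter] at hc
    exact flip_flip hw hc.2
  · intro c hc
    rw [Finset.mem_filter] at hc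
    exact flip_flip hw hc.2
  · intro c hc
    rw [Finset.mem_filter] at hc
    exact flip_wfac hw hc.2

end Weights


section RowProd

variable {τ0 : Cell ν → Fin r} {v w : Fin r}

def tseq (τ0 : Cell ν → Fin r) (v w : Fin r) (i : Fin r) (k : ℕ) :
    MvPolynomial (Fin r) (MvPolynomial ℕ ℤ) :=
  MvPolynomial.C (MvPolynomial.X ((v : ℕ) + (minc τ0 v w i + k) - (i : ℕ)))

def rowF (τ0 : Cell ν → Fin r) (v w : Fin r) (i : Fin r) (z : ℕ) :
    MvPolynomial (Fin r) (MvPolynomial ℕ ℤ) :=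
  ∏ k ∈ Finset.range (mfree τ0 v w i),
    (if k < z then MvPolynomial.X v - tseq τ0 v w i k
     else MvPolynomial.X w - tseq τ0 v w i (k + 1))

def rowFs (τ0 : Cell ν → Fin r) (v w : Fin r) (i : Fin r) (z : ℕ) :
    MvPolynomial (Fin r) (MvPolynomial ℕ ℤ) :=
  ∏ k ∈ Finset.range (mfree τ0 v w i),
    (if k < z then MvPolynomial.X w - tseq τ0 v w i k
     else MvPolynomial.X v - tseq τ0 v w i (k + 1))

variable (hν : Antitone ν) (hw : (w : ℕ) = (v : ℕ) + 1)
variable (hrow : ∀ c d : Cell ν, c.1.1 = d.1.1 → c.1.2 ≤ d.1.2 → τ0 c ≤ τ0 d)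
variable (hcol : ∀ c d : Cell ν, c.1.2 = d.1.2 → c.1.1 < d.1.1 → τ0 c < τ0 d)

include hν hw hrow hcol

lemma rowprod (a : Fin r → ℕ) (i : Fin r) :
    ∏ c ∈ frees τ0 v w i, wfac (reasm τ0 v w a c) c = rowF τ0 v w i (a i) := by
  have step1 : ∏ c ∈ frees τ0 v w i, wfac (reasm τ0 v w a c) c
      = ∏ c ∈ frees τ0 v w i,
          (fun j : ℕ => if j < minc τ0 v w i + a i
            then MvPolynomial.X v - MvPolynomial.C (MvPolynomial.X ((v : ℕ) + j - (i : ℕ)))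
            else MvPolynomial.X w - MvPolynomial.C (MvPolynomial.X ((w : ℕ) + j - (i : ℕ))))
          c.1.2 := by
    refine Finset.prod_congr rfl fun c hc => ?_
    obtain ⟨hF, hi⟩ := mem_frees.1 hc
    simp only
    unfold reasm
    rw [if_pos hF, hi]
    split_ifs with h
    · rw [wfac, hi]
    · rw [wfac, hi]
  rw [step1,
    ← Finset.prod_image (s := frees τ0 v w i) (g := fun c : Cell ν => c.1.2)
      (f := fun j : ℕ => if j < minc τ0 v w i + a i
      then MvPolynomial.X v - MvPolynomial.C (MvPolynomial.X ((v : ℕ) + j - (i : ℕ)))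
      else MvPolynomial.X w - MvPolynomial.C (MvPolynomial.X ((w : ℕ) + j - (i : ℕ))))
      (fun x hx y hy h => frees_injOn i (Finset.mem_coe.2 hx) (Finset.mem_coe.2 hy) h),
    cols_eq hν hw hrow hcol i, Finset.prod_Ico_eq_prod_range, Nat.add_sub_cancel_left, rowF]
  refine Finset.prod_congr rfl fun k hk => ?_
  by_cases h : k < a i
  · rw [if_pos (by omega : minc τ0 v w i + k < minc τ0 v w i + a i), if_pos h, tseq]
  · rw [if_neg (by omega : ¬ (minc τ0 v w i + k < minc τ0 v w i + a i)), if_neg h, tseq]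
    congr 3
    omega

lemma rowprods (a : Fin r → ℕ) (i : Fin r) :
    ∏ c ∈ frees τ0 v w i, wfacs v w (reasm τ0 v w a c) c = rowFs τ0 v w i (a i) := by
  have step1 : ∏ c ∈ frees τ0 v w i, wfacs v w (reasm τ0 v w a c) c
      = ∏ c ∈ frees τ0 v w i,
          (fun j : ℕ => if j < minc τ0 v w i + a i
            then MvPolynomial.X w - MvPolynomial.C (MvPolynomial.X ((v : ℕ) + j - (i : ℕ)))
            else MvPolynomial.X v - MvPolynomial.C (MvPolynomial.X ((w : ℕ) + j - (i : ℕ))))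
          c.1.2 := by
    refine Finset.prod_congr rfl fun c hc => ?_
    obtain ⟨hF, hi⟩ := mem_frees.1 hc
    simp only
    unfold reasm
    rw [if_pos hF, hi]
    split_ifs with h
    · rw [wfacs, hi, Equiv.swap_apply_left]
    · rw [wfacs, hi, Equiv.swap_apply_right]
  rw [step1,
    ← Finset.prod_image (s := frees τ0 v w i) (g := fun c : Cell ν => c.1.2)
      (f := fun j : ℕ => if j < minc τ0 v w i + a i
      then MvPolynomial.X w - MvPolynomial.C (MvPolynomial.X ((v : ℕ) + j - (i : ℕ)))
      else MvPolynomial.X v - MvPolynomial.C (MvPolynomial.X ((w : ℕ) + j - (i : ℕ))))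
      (fun x hx y hy h => frees_injOn i (Finset.mem_coe.2 hx) (Finset.mem_coe.2 hy) h),
    cols_eq hν hw hrow hcol i, Finset.prod_Ico_eq_prod_range, Nat.add_sub_cancel_left, rowFs]
  refine Finset.prod_congr rfl fun k hk => ?_
  by_cases h : k < a i
  · rw [if_pos (by omega : minc τ0 v w i + k < minc τ0 v w i + a i), if_pos h, tseq]
  · rw [if_neg (by omega : ¬ (minc τ0 v w i + k < minc τ0 v w i + a i)), if_neg h, tseq]
    congr 3
    omega

lemma weight_split (a : Fin r → ℕ) :
    ∏ c : Cell ν, wfac (reasm τ0 v w a c) c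
      = (∏ c ∈ Finset.univ.filter (fun c => ¬ FreeC τ0 v w c), wfac (τ0 c) c)
        * ∏ i : Fin r, rowF τ0 v w i (a i) := by
  rw [← Finset.prod_filter_mul_prod_filter_not Finset.univ (fun c => FreeC τ0 v w c), mul_comm]
  congr 1
  · refine Finset.prod_congr rfl fun c hc => ?_
    rw [Finset.mem_filter] at hc
    rw [reasm_nonfree a hc.2]
  · rw [← Finset.prod_fiberwise_of_maps_to (g := fun c : Cell ν => c.1.1)
      (t := Finset.univ) (fun c _ => Finset.mem_univ _)]
    refine Finset.prod_congr rfl fun i _ => ?_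
    rw [Finset.filter_filter]
    exact rowprod hν hw hrow hcol a i

lemma weight_splits (a : Fin r → ℕ) :
    ∏ c : Cell ν, wfacs v w (reasm τ0 v w a c) c
      = (∏ c ∈ Finset.univ.filter (fun c => ¬ FreeC τ0 v w c), wfacs v w (τ0 c) c)
        * ∏ i : Fin r, rowFs τ0 v w i (a i) := by
  rw [← Finset.prod_filter_mul_prod_filter_not Finset.univ (fun c => FreeC τ0 v w c), mul_comm]
  congr 1
  · refine Finset.prod_congr rfl fun c hc => ?_
    rw [Finset.mem_filter] at hc
    rw [reasm_nonfree a hc.2]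
  · rw [← Finset.prod_fiberwise_of_maps_to (g := fun c : Cell ν => c.1.1)
      (t := Finset.univ) (fun c _ => Finset.mem_univ _)]
    refine Finset.prod_congr rfl fun i _ => ?_
    rw [Finset.filter_filter]
    exact rowprods hν hw hrow hcol a i

end RowProd

set_option maxHeartbeats 2000000 in
lemma core_swap (hν : Antitone ν) (v w : Fin r) (hw : (w : ℕ) = (v : ℕ) + 1) :
    MvPolynomial.rename (⇑(Equiv.swap v w)) (factSchur ν r) = factSchur ν r := by
  have hXwv : (MvPolynomial.X w : MvPolynomial (Fin r) (MvPolynomial ℕ ℤ)) ≠ MvPolynomial.X v :=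
    fun h => vw_ne hw (MvPolynomial.X_injective h).symm
  unfold factSchur
  rw [map_sum]
  have h1 : ∀ τ ∈ SSTFinset ν r,
      MvPolynomial.rename (⇑(Equiv.swap v w))
        (∏ c : Cell ν,
          (MvPolynomial.X (τ c)
            - MvPolynomial.C (MvPolynomial.X ((τ c : ℕ) + c.1.2 - (c.1.1 : ℕ)))))
        = ∏ c : Cell ν, wfacs v w (τ c) c := by
    intro τ _
    rw [map_prod]
    exact Finset.prod_congr rfl fun c _ => by
      rw [map_sub, MvPolynomial.rename_X, MvPolynomial.rename_C, wfacs]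
  rw [Finset.sum_congr rfl h1]
  have h2 : ∀ τ ∈ SSTFinset ν r,
      (∏ c : Cell ν,
        (MvPolynomial.X (τ c)
          - MvPolynomial.C (MvPolynomial.X ((τ c : ℕ) + c.1.2 - (c.1.1 : ℕ)))))
        = ∏ c : Cell ν, wfac (τ c) c := fun τ _ =>
    Finset.prod_congr rfl fun c _ => by rw [wfac]
  rw [Finset.sum_congr rfl h2]
  rw [← Finset.sum_fiberwise_of_maps_to (g := fun τ : Cell ν → Fin r => frameMap τ v w)
      (t := (SSTFinset ν r).image fun τ => frameMap τ v w)
      (fun τ hτ => Finset.mem_image_of_mem _ hτ) (fun τ => ∏ c : Cell ν, wfacs v w (τ c) c),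
    ← Finset.sum_fiberwise_of_maps_to (g := fun τ : Cell ν → Fin r => frameMap τ v w)
      (t := (SSTFinset ν r).image fun τ => frameMap τ v w)
      (fun τ hτ => Finset.mem_image_of_mem _ hτ) (fun τ => ∏ c : Cell ν, wfac (τ c) c)]
  refine Finset.sum_congr rfl fun φ hφ => ?_
  obtain ⟨τ0, hτ0, rfl⟩ := Finset.mem_image.1 hφ
  obtain ⟨hrow, hcol⟩ := mem_SST.1 hτ0
  have hinj : ∀ a ∈ box τ0 v w, ∀ b ∈ box τ0 v w,
      reasm τ0 v w a = reasm τ0 v w b → a = b := by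
    intro a ha b hb h
    rw [← cntv_reasm hν hw hrow hcol ha, ← cntv_reasm hν hw hrow hcol hb, h]
  rw [fiber_eq hν hw hrow hcol hτ0, Finset.sum_image hinj, Finset.sum_image hinj,
    Finset.sum_congr rfl (fun a _ => weight_splits hν hw hrow hcol a),
    Finset.sum_congr rfl (fun a _ => weight_split hν hw hrow hcol a),
    ← Finset.mul_sum, ← Finset.mul_sum, Wout_eq hw]
  congr 1
  rw [box, ← Finset.prod_univ_sum (fun i => Finset.range (mfree τ0 v w i + 1))
      (fun i z => rowFs τ0 v w i z),
    ← Finset.prod_univ_sum (fun i => Finset.range (mfree τ0 v w i + 1))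
      (fun i z => rowF τ0 v w i z)]
  refine Finset.prod_congr rfl fun i _ => ?_
  simp only [rowF, rowFs]
  exact key_symm hXwv (tseq τ0 v w i) (mfree τ0 v w i)

end Comb
end FSAux

set_option linter.unusedSectionVars false

/-- For a partition `ν` with at most `r` parts and `ν_1 ≤ n - r`, the factorial Schur
polynomial is symmetric in the variables `u_1, ..., u_r`. -/
theorem stmt8 (r n : ℕ) (ν : Fin r → ℕ) (hν : Antitone ν) (hb : ∀ i, ν i ≤ n - r)
    (σ : Equiv.Perm (Fin r)) :
    MvPolynomial.rename (⇑σ) (factSchur ν r) = factSchur ν r := by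
  clear hb
  revert σ
  revert hν
  revert ν
  cases r with
  | zero =>
    intro ν hν σ
    have hσ : σ = 1 := Equiv.ext fun x => x.elim0
    rw [hσ, Equiv.Perm.coe_one, MvPolynomial.rename_id, AlgHom.id_apply]
  | succ m =>
    intro ν hν σ
    have hmem : σ ∈ Submonoid.closure
        (Set.range fun i : Fin m => Equiv.swap i.castSucc i.succ) := by
      rw [Equiv.Perm.mclosure_swap_castSucc_succ]
      exact Submonoid.mem_top σ
    refine Submonoid.closure_induction ?_ ?_ ?_ hmem
    · rintro x ⟨i, rfl⟩
      exact FSAux.core_swap hν i.castSucc i.succ (by simp)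
    · rw [Equiv.Perm.coe_one, MvPolynomial.rename_id, AlgHom.id_apply]
    · intro x y _ _ hhx hhy
      rw [Equiv.Perm.coe_mul, ← MvPolynomial.rename_rename, hhy, hhx]
end
end

section
/- The set of Schur polynomials s_λ(u_1,...,u_r), as λ ranges over all partitions with at most r parts, forms a ℤ-module basis of the ring ℤ[u_1,...,u_r]^{S_r} of symmetric polynomials in r variables. -/
open Finset MvPolynomial

noncomputable section

/-- The `R`-submodule of `MvPolynomial (Fin r) R` consisting of the symmetric polynomials
(those invariant under every permutation of the variables). -/
def symmSubmodule (r : ℕ) (R : Type*) [CommSemiring R] :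
    Submodule R (MvPolynomial (Fin r) R) where
  carrier := {P | P.IsSymmetric}
  add_mem' := fun {P Q} hP hQ e => by rw [map_add, hP e, hQ e]
  zero_mem' := fun e => map_zero _
  smul_mem' := fun c P hP e => by
    rw [MvPolynomial.smul_eq_C_mul, map_mul, MvPolynomial.rename_C, hP e,
      ← MvPolynomial.smul_eq_C_mul]

namespace S11

open scoped Classical

variable {r : ℕ}

abbrev Cell (ν : Fin r → ℕ) := {x // x ∈ cellsOf ν}

lemma cell_mem {ν : Fin r → ℕ} (c : Cell ν) : c.1.2 < ν c.1.1 := by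
  have := c.2
  simp only [cellsOf, Finset.mem_sigma, Finset.mem_range] at this
  exact this.2

def mkCell (ν : Fin r → ℕ) (i : Fin r) (j : ℕ) (h : j < ν i) : Cell ν :=
  ⟨⟨i, j⟩, by simp [cellsOf, h]⟩

lemma cell_ext {ν : Fin r → ℕ} {c d : Cell ν} (h1 : c.1.1 = d.1.1) (h2 : c.1.2 = d.1.2) :
    c = d := by
  apply Subtype.ext
  exact Sigma.ext h1 (heq_iff_eq.mpr h2)

lemma row_mono {ν : Fin r → ℕ} {τ : Cell ν → Fin r} (hτ : τ ∈ SSTFinset ν r)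
    {c d : Cell ν} (h1 : c.1.1 = d.1.1) (h2 : c.1.2 ≤ d.1.2) : τ c ≤ τ d :=
  (Finset.mem_filter.1 hτ).2.1 c d h1 h2

lemma col_strict {ν : Fin r → ℕ} {τ : Cell ν → Fin r} (hτ : τ ∈ SSTFinset ν r)
    {c d : Cell ν} (h1 : c.1.2 = d.1.2) (h2 : c.1.1 < d.1.1) : τ c < τ d :=
  (Finset.mem_filter.1 hτ).2.2 c d h1 h2

/-- SSYT membership from the adjacent conditions, for an antitone shape. -/
lemma SST_of_adjacent {ν : Fin r → ℕ} (hν : Antitone ν) (τ : Cell ν → Fin r)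
    (hrow : ∀ c d : Cell ν, c.1.1 = d.1.1 → d.1.2 = c.1.2 + 1 → τ c ≤ τ d)
    (hcol : ∀ c d : Cell ν, c.1.2 = d.1.2 → (d.1.1 : ℕ) = (c.1.1 : ℕ) + 1 → τ c < τ d) :
    τ ∈ SSTFinset ν r := by
  rw [SSTFinset, Finset.mem_filter]
  refine ⟨Finset.mem_univ _, ?_, ?_⟩
  · -- rows
    have key : ∀ n : ℕ, ∀ c d : Cell ν, c.1.1 = d.1.1 → d.1.2 = c.1.2 + n → τ c ≤ τ d := by
      intro n
      induction n with
      | zero => intro c d h1 h2; rw [cell_ext h1 (by omega)]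
      | succ n ih =>
        intro c d h1 h2
        have hd := cell_mem d
        have he : c.1.2 + n < ν c.1.1 := by rw [h1]; omega
        let e : Cell ν := mkCell ν c.1.1 (c.1.2 + n) he
        have h3 : τ c ≤ τ e := ih c e rfl rfl
        exact h3.trans (hrow e d (h1 ▸ rfl) (by simp [e, mkCell]; omega))
    intro c d h1 h2
    obtain ⟨n, hn⟩ := Nat.exists_eq_add_of_le h2
    exact key n c d h1 hn
  · -- columns
    have key : ∀ n : ℕ, ∀ c d : Cell ν, c.1.2 = d.1.2 → (d.1.1 : ℕ) = (c.1.1 : ℕ) + n + 1 →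
        τ c < τ d := by
      intro n
      induction n with
      | zero => intro c d h1 h2; exact hcol c d h1 (by omega)
      | succ n ih =>
        intro c d h1 h2
        have hir : (c.1.1 : ℕ) + n + 1 < r := by have := d.1.1.2; omega
        have hle : (⟨(c.1.1 : ℕ) + n + 1, hir⟩ : Fin r) ≤ d.1.1 := by
          rw [Fin.le_def]; simp; omega
        have he : c.1.2 < ν (⟨(c.1.1 : ℕ) + n + 1, hir⟩ : Fin r) := by
          have := cell_mem d
          calc c.1.2 = d.1.2 := h1
          _ < ν d.1.1 := cell_mem d
          _ ≤ ν _ := hν hle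
        let e : Cell ν := mkCell ν ⟨(c.1.1 : ℕ) + n + 1, hir⟩ c.1.2 he
        have h3 : τ c < τ e := ih c e rfl rfl
        exact h3.trans (hcol e d (by simp [e, mkCell, h1]) (by simp [e, mkCell]; omega))
    intro c d h1 h2
    rw [Fin.lt_def] at h2
    obtain ⟨n, hn⟩ := Nat.exists_eq_add_of_le h2
    exact key n c d h1 (by omega)

/-! ### Weights -/

def wt (ν : Fin r → ℕ) (τ : Cell ν → Fin r) : Fin r →₀ ℕ :=
  ∑ c : Cell ν, Finsupp.single (τ c) 1

lemma wt_apply {ν : Fin r → ℕ} (τ : Cell ν → Fin r) (v : Fin r) :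
    wt ν τ v = (Finset.univ.filter fun c : Cell ν => τ c = v).card := by
  rw [wt, Finsupp.finset_sum_apply]
  rw [Finset.card_eq_sum_ones, Finset.sum_filter]
  congr 1
  ext c
  simp [Finsupp.single_apply]

lemma prod_X_eq {ι σ : Type*} [Fintype ι] (f : ι → σ) :
    (∏ i : ι, (X (f i) : MvPolynomial σ ℤ)) =
      monomial (∑ i : ι, Finsupp.single (f i) 1) 1 := by
  classical
  have : ∀ s : Finset ι, (∏ i ∈ s, (X (f i) : MvPolynomial σ ℤ)) =
      monomial (∑ i ∈ s, Finsupp.single (f i) 1) 1 := by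
    intro s
    induction s using Finset.induction_on with
    | empty => simp [monomial_zero']
    | insert _ _ h ih =>
      rw [Finset.prod_insert h, Finset.sum_insert h, ih, X, monomial_mul, one_mul]
  exact this Finset.univ

lemma coeff_schurP (ν : Fin r → ℕ) (d : Fin r →₀ ℕ) :
    coeff d (schurP ν r ℤ) =
      (((SSTFinset ν r)).filter fun τ => wt ν τ = d).card := by
  rw [schurP, coeff_sum]
  have : ∀ τ : Cell ν → Fin r, coeff d (∏ c : Cell ν, (X (τ c) : MvPolynomial (Fin r) ℤ)) =
      if wt ν τ = d then 1 else 0 := by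
    intro τ
    rw [prod_X_eq, coeff_monomial, wt]
  rw [Finset.sum_congr rfl fun τ _ => this τ, Finset.sum_boole]



/-! ### Rows and dominance -/

lemma entry_ge_row {ν : Fin r → ℕ} (hν : Antitone ν) {τ : Cell ν → Fin r}
    (hτ : τ ∈ SSTFinset ν r) (c : Cell ν) : (c.1.1 : ℕ) ≤ (τ c : ℕ) := by
  have key : ∀ n : ℕ, ∀ c : Cell ν, (c.1.1 : ℕ) = n → n ≤ (τ c : ℕ) := by
    intro n
    induction n with
    | zero => intro c _; omega
    | succ n ih =>
      intro c hc
      have hnr : n < r := by have := c.1.1.2; omega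
      have hle : (⟨n, hnr⟩ : Fin r) ≤ c.1.1 := by rw [Fin.le_def]; simp; omega
      have he : c.1.2 < ν (⟨n, hnr⟩ : Fin r) := lt_of_lt_of_le (cell_mem c) (hν hle)
      let e : Cell ν := mkCell ν ⟨n, hnr⟩ c.1.2 he
      have h1 : τ e < τ c := col_strict hτ rfl (by rw [Fin.lt_def]; simp [e, mkCell]; omega)
      have h2 : n ≤ (τ e : ℕ) := ih e rfl
      rw [Fin.lt_def] at h1
      omega
  exact key _ c rfl

lemma card_row (ν : Fin r → ℕ) (i : Fin r) :
    (Finset.univ.filter fun c : Cell ν => c.1.1 = i).card = ν i := by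
  rw [← Finset.card_range (ν i)]
  refine Finset.card_bij' (fun c _ => c.1.2)
    (fun j hj => mkCell ν i j (Finset.mem_range.1 hj)) ?_ ?_ ?_ ?_
  · intro c hc
    have h := cell_mem c
    rw [(Finset.mem_filter.1 hc).2] at h
    exact Finset.mem_range.2 h
  · intro j hj
    exact Finset.mem_filter.2 ⟨Finset.mem_univ _, rfl⟩
  · intro c hc
    exact cell_ext ((Finset.mem_filter.1 hc).2).symm rfl
  · intro j hj
    rfl

def psum (f : Fin r → ℕ) (k : ℕ) : ℕ :=
  ∑ i ∈ Finset.univ.filter (fun i : Fin r => (i : ℕ) < k), f i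

lemma psum_succ (f : Fin r → ℕ) {k : ℕ} (hk : k < r) :
    psum f (k + 1) = psum f k + f ⟨k, hk⟩ := by
  rw [psum, psum]
  have h1 : Finset.univ.filter (fun i : Fin r => (i : ℕ) < k + 1) =
      insert ⟨k, hk⟩ (Finset.univ.filter (fun i : Fin r => (i : ℕ) < k)) := by
    ext i
    simp [Fin.ext_iff]
    omega
  rw [h1, Finset.sum_insert (by simp)]
  omega

lemma psum_ext {f g : Fin r → ℕ} (h : ∀ k, psum f k = psum g k) : f = g := by
  funext i
  have h1 := psum_succ f i.2
  have h2 := psum_succ g i.2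
  rw [Fin.eta] at h1 h2
  have h3 := h (i : ℕ)
  have h4 := h ((i : ℕ) + 1)
  omega

lemma le_psum (f : Fin r → ℕ) (i : Fin r) {k : ℕ} (h : (i : ℕ) < k) : f i ≤ psum f k :=
  Finset.single_le_sum (fun _ _ => Nat.zero_le _) (by simp [h])

def LtD (f g : Fin r → ℕ) : Prop :=
  (∀ k, psum f k ≤ psum g k) ∧ psum f r = psum g r ∧ f ≠ g

lemma LtD_trans {f g h : Fin r → ℕ} (h1 : LtD f g) (h2 : LtD g h) : LtD f h := by
  obtain ⟨a1, a2, a3⟩ := h1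
  obtain ⟨b1, b2, b3⟩ := h2
  refine ⟨fun k => (a1 k).trans (b1 k), a2.trans b2, ?_⟩
  rintro rfl
  exact a3 (psum_ext fun k => le_antisymm (a1 k) (b1 k))

lemma LtD_irrefl (f : Fin r → ℕ) : ¬LtD f f := fun h => h.2.2 rfl

lemma card_lt_val {ν : Fin r → ℕ} (μ : Fin r → ℕ) {τ : Cell ν → Fin r}
    (hw : ∀ v, wt ν τ v = μ v) (k : ℕ) :
    (Finset.univ.filter fun c : Cell ν => (τ c : ℕ) < k).card = psum μ k := by
  rw [psum, Finset.card_eq_sum_card_fiberwise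
    (f := τ) (t := Finset.univ.filter fun i : Fin r => (i : ℕ) < k)
    (fun c hc => by simpa using (Finset.mem_filter.1 hc).2)]
  apply Finset.sum_congr rfl
  intro i hi
  rw [Finset.mem_filter] at hi
  rw [← hw i, wt_apply]
  congr 1
  ext c
  simp only [Finset.mem_filter, Finset.mem_univ, true_and]
  constructor
  · exact fun h => h.2
  · intro h
    exact ⟨by rw [h]; exact hi.2, h⟩

lemma card_lt_row (ν : Fin r → ℕ) (k : ℕ) :
    (Finset.univ.filter fun c : Cell ν => (c.1.1 : ℕ) < k).card = psum ν k := by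
  rw [psum, Finset.card_eq_sum_card_fiberwise
    (f := fun c : Cell ν => c.1.1) (t := Finset.univ.filter fun i : Fin r => (i : ℕ) < k)
    (fun c hc => by simpa using (Finset.mem_filter.1 hc).2)]
  apply Finset.sum_congr rfl
  intro i hi
  rw [Finset.mem_filter] at hi
  rw [← card_row ν i]
  congr 1
  ext c
  simp only [Finset.mem_filter, Finset.mem_univ, true_and]
  constructor
  · exact fun h => h.2
  · intro h
    exact ⟨by rw [h]; exact hi.2, h⟩

lemma dominance {ν : Fin r → ℕ} (hν : Antitone ν) (μ : Fin r → ℕ) {τ : Cell ν → Fin r}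
    (hτ : τ ∈ SSTFinset ν r) (hw : ∀ v, wt ν τ v = μ v) :
    (∀ k, psum μ k ≤ psum ν k) ∧ psum μ r = psum ν r := by
  constructor
  · intro k
    rw [← card_lt_val μ hw k, ← card_lt_row ν k]
    apply Finset.card_le_card
    intro c hc
    rw [Finset.mem_filter] at hc ⊢
    refine ⟨hc.1, ?_⟩
    exact lt_of_le_of_lt (entry_ge_row hν hτ c) hc.2
  · rw [← card_lt_val μ hw r, ← card_lt_row ν r]
    congr 1
    ext c
    simp [(τ c).2, c.1.1.2]

lemma wt_shape_unique {ν : Fin r → ℕ} (hν : Antitone ν) {τ : Cell ν → Fin r}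
    (hτ : τ ∈ SSTFinset ν r) (hw : ∀ v, wt ν τ v = ν v) : τ = fun c => c.1.1 := by
  funext c
  have hk : ((c.1.1 : ℕ) + 1) ≤ r := c.1.1.2
  have hsub : (Finset.univ.filter fun d : Cell ν => (τ d : ℕ) < (c.1.1 : ℕ) + 1) ⊆
      (Finset.univ.filter fun d : Cell ν => (d.1.1 : ℕ) < (c.1.1 : ℕ) + 1) := by
    intro d hd
    rw [Finset.mem_filter] at hd ⊢
    exact ⟨hd.1, lt_of_le_of_lt (entry_ge_row hν hτ d) hd.2⟩
  have hcard : (Finset.univ.filter fun d : Cell ν => (d.1.1 : ℕ) < (c.1.1 : ℕ) + 1).card ≤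
      (Finset.univ.filter fun d : Cell ν => (τ d : ℕ) < (c.1.1 : ℕ) + 1).card := by
    rw [card_lt_val ν hw, card_lt_row]
  have heq := Finset.eq_of_subset_of_card_le hsub hcard
  have hc : c ∈ Finset.univ.filter fun d : Cell ν => (d.1.1 : ℕ) < (c.1.1 : ℕ) + 1 := by
    simp
  rw [← heq, Finset.mem_filter] at hc
  have := entry_ge_row hν hτ c
  exact Fin.ext (by omega)

def eV (μ : {ν : Fin r → ℕ // Antitone ν}) : Fin r →₀ ℕ :=
  Finsupp.equivFunOnFinite.symm μ.1

@[simp] lemma eV_apply (μ : {ν : Fin r → ℕ // Antitone ν}) (i : Fin r) : eV μ i = μ.1 i := rfl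

lemma eV_injective : Function.Injective (eV (r := r)) := fun x y h =>
  Subtype.ext (Finsupp.equivFunOnFinite.symm.injective h)

lemma coeff_diag {ν : Fin r → ℕ} (hν : Antitone ν) :
    coeff (eV ⟨ν, hν⟩) (schurP ν r ℤ) = 1 := by
  rw [coeff_schurP]
  have hfilter : (SSTFinset ν r).filter (fun τ => wt ν τ = eV ⟨ν, hν⟩) =
      {fun c : Cell ν => c.1.1} := by
    ext τ
    simp only [Finset.mem_filter, Finset.mem_singleton]
    constructor
    · rintro ⟨h1, h2⟩
      exact wt_shape_unique hν h1 (fun v => by rw [h2]; rfl)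
    · rintro rfl
      constructor
      · apply SST_of_adjacent hν
        · intro c d h1 _
          exact le_of_eq h1
        · intro c d _ h2
          rw [Fin.lt_def]
          omega
      · ext v
        rw [wt_apply]
        exact card_row ν v
  rw [hfilter]
  simp

lemma coeff_triangle {ν μ : {ν : Fin r → ℕ // Antitone ν}}
    (h : coeff (eV μ) (schurP ν.1 r ℤ) ≠ 0) : μ = ν ∨ LtD μ.1 ν.1 := by
  rw [coeff_schurP] at h
  have hne : ((SSTFinset ν.1 r).filter fun τ => wt ν.1 τ = eV μ).Nonempty := by
    rw [Finset.nonempty_iff_ne_empty]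
    intro hemp
    rw [hemp] at h
    simp at h
  obtain ⟨τ, hτm⟩ := hne
  rw [Finset.mem_filter] at hτm
  obtain ⟨hτ, hw⟩ := hτm
  have hw' : ∀ v, wt ν.1 τ v = μ.1 v := fun v => by rw [hw]; rfl
  obtain ⟨hle, htot⟩ := dominance ν.2 μ.1 hτ hw'
  by_cases he : μ.1 = ν.1
  · exact Or.inl (Subtype.ext he)
  · exact Or.inr ⟨hle, htot, he⟩

/-! ### The measure -/

def Below (ν : {ν : Fin r → ℕ // Antitone ν}) : Set {ν : Fin r → ℕ // Antitone ν} :=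
  {μ | LtD μ.1 ν.1}

lemma below_finite (ν : {ν : Fin r → ℕ // Antitone ν}) : (Below ν).Finite := by
  have h1 : Below ν ⊆ Subtype.val ⁻¹'
      (Set.pi Set.univ fun _ : Fin r => Set.Iic (psum ν.1 r)) := by
    intro μ hμ
    intro i _
    have h2 : μ.1 i ≤ psum μ.1 r := le_psum μ.1 i i.2
    have h3 : psum μ.1 r = psum ν.1 r := hμ.2.1
    simp only [Set.mem_Iic]
    omega
  exact (((Set.Finite.pi fun _ => Set.finite_Iic _)).preimage
    (Subtype.val_injective.injOn)).subset h1

def mMeas (ν : {ν : Fin r → ℕ // Antitone ν}) : ℕ := (Below ν).ncard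

lemma mMeas_lt {μ ν : {ν : Fin r → ℕ // Antitone ν}} (h : LtD μ.1 ν.1) :
    mMeas μ < mMeas ν := by
  apply Set.ncard_lt_ncard ?_ (below_finite ν)
  rw [Set.ssubset_def]
  constructor
  · intro κ hκ
    exact LtD_trans hκ h
  · intro hsub
    exact LtD_irrefl μ.1 (hsub (show μ ∈ Below ν from h))

/-! ### Injectivity on antitone coefficients -/

lemma symm_ext {P : MvPolynomial (Fin r) ℤ} (hP : P.IsSymmetric)
    (h : ∀ μ : {ν : Fin r → ℕ // Antitone ν}, coeff (eV μ) P = 0) : P = 0 := by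
  apply MvPolynomial.ext
  intro d
  rw [coeff_zero]
  have hmono : Monotone (⇑d ∘ Tuple.sort ⇑d) := Tuple.monotone_sort ⇑d
  let σ : Equiv.Perm (Fin r) := Fin.revPerm.trans (Tuple.sort ⇑d)
  have hanti : Antitone (⇑d ∘ σ) := by
    intro x y hxy
    exact hmono (Fin.rev_le_rev.mpr hxy)
  have hmap : Finsupp.mapDomain σ (eV ⟨⇑d ∘ σ, hanti⟩) = d := by
    ext v
    rw [Finsupp.mapDomain_equiv_apply, eV_apply]
    show d (σ (σ.symm v)) = d v
    rw [Equiv.apply_symm_apply]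
  calc coeff d P = coeff (Finsupp.mapDomain σ (eV ⟨⇑d ∘ σ, hanti⟩)) (rename σ P) := by
        rw [hP σ, hmap]
  _ = coeff (eV ⟨⇑d ∘ σ, hanti⟩) P := coeff_rename_mapDomain σ σ.injective P _
  _ = 0 := h _

/-! ### The linear map to finsupps on partitions -/

def Phi : symmSubmodule r ℤ →ₗ[ℤ] ({ν : Fin r → ℕ // Antitone ν} →₀ ℤ) where
  toFun P := Finsupp.onFinset
    ((P : MvPolynomial (Fin r) ℤ).support.preimage eV (eV_injective.injOn))
    (fun μ => coeff (eV μ) (P : MvPolynomial (Fin r) ℤ))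
    (fun μ h => Finset.mem_preimage.2 (mem_support_iff.2 h))
  map_add' P Q := by
    ext μ
    simp [Finsupp.onFinset_apply]
  map_smul' c P := by
    ext μ
    simp only [Finsupp.onFinset_apply, RingHom.id_apply, Finsupp.coe_smul, Pi.smul_apply,
      SetLike.val_smul, MvPolynomial.coeff_smul, smul_eq_mul]

lemma Phi_apply (P : symmSubmodule r ℤ) (μ : {ν : Fin r → ℕ // Antitone ν}) :
    Phi P μ = coeff (eV μ) (P : MvPolynomial (Fin r) ℤ) := rfl

lemma Phi_injective : Function.Injective (Phi (r := r)) := by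
  apply LinearMap.ker_eq_bot.1
  apply LinearMap.ker_eq_bot'.2
  intro P hP
  have h0 : (P : MvPolynomial (Fin r) ℤ) = 0 := by
    apply symm_ext P.2
    intro μ
    rw [← Phi_apply, hP]
    rfl
  exact Subtype.ext h0



/-! ### The Bender–Knuth involution -/

section BK

variable {ν : Fin r → ℕ} {a b : Fin r}

def HasBelowB (b : Fin r) (τ : Cell ν → Fin r) (c : Cell ν) : Prop :=
  ∃ d : Cell ν, (d.1.1 : ℕ) = (c.1.1 : ℕ) + 1 ∧ d.1.2 = c.1.2 ∧ τ d = b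

def HasAboveA (a : Fin r) (τ : Cell ν → Fin r) (c : Cell ν) : Prop :=
  ∃ d : Cell ν, (c.1.1 : ℕ) = (d.1.1 : ℕ) + 1 ∧ d.1.2 = c.1.2 ∧ τ d = a

def IsFree (a b : Fin r) (τ : Cell ν → Fin r) (c : Cell ν) : Prop :=
  (τ c = a ∧ ¬HasBelowB b τ c) ∨ (τ c = b ∧ ¬HasAboveA a τ c)

def freeRow (a b : Fin r) (τ : Cell ν → Fin r) (R : Fin r) : Finset (Cell ν) :=
  Finset.univ.filter fun c => c.1.1 = R ∧ IsFree a b τ c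

def xIdx (a b : Fin r) (τ : Cell ν → Fin r) (c : Cell ν) : ℕ :=
  ((freeRow a b τ c.1.1).filter fun d => d.1.2 < c.1.2).card

def fbCnt (a b : Fin r) (τ : Cell ν → Fin r) (R : Fin r) : ℕ :=
  ((freeRow a b τ R).filter fun d => τ d = b).card

def faCnt (a b : Fin r) (τ : Cell ν → Fin r) (R : Fin r) : ℕ :=
  ((freeRow a b τ R).filter fun d => τ d = a).card

def bk (a b : Fin r) (τ : Cell ν → Fin r) (c : Cell ν) : Fin r :=
  if IsFree a b τ c then
    (if xIdx a b τ c < fbCnt a b τ c.1.1 then a else b) else τ c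

lemma free_val {τ : Cell ν → Fin r} {c : Cell ν} (h : IsFree a b τ c) :
    τ c = a ∨ τ c = b := h.imp And.left And.left

lemma not_free_iff {τ : Cell ν → Fin r} {c : Cell ν} :
    ¬IsFree a b τ c ↔ (τ c = a → HasBelowB b τ c) ∧ (τ c = b → HasAboveA a τ c) := by
  rw [IsFree]
  tauto

lemma hasBelowB_iff {τ : Cell ν → Fin r} {c d : Cell ν}
    (h1 : (d.1.1 : ℕ) = (c.1.1 : ℕ) + 1) (h2 : d.1.2 = c.1.2) :
    HasBelowB b τ c ↔ τ d = b := by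
  constructor
  · rintro ⟨e, he1, he2, he3⟩
    rwa [show d = e from cell_ext (Fin.ext (by omega)) (by rw [h2, he2])]
  · intro h
    exact ⟨d, h1, h2, h⟩

lemma hasAboveA_iff {τ : Cell ν → Fin r} {c d : Cell ν}
    (h1 : (c.1.1 : ℕ) = (d.1.1 : ℕ) + 1) (h2 : d.1.2 = c.1.2) :
    HasAboveA a τ c ↔ τ d = a := by
  constructor
  · rintro ⟨e, he1, he2, he3⟩
    rwa [show d = e from cell_ext (Fin.ext (by omega)) (by rw [h2, he2])]
  · intro h
    exact ⟨d, h1, h2, h⟩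

variable {τ : Cell ν → Fin r}

lemma below_val_large (hab : (a : ℕ) + 1 = b) (hτ : τ ∈ SSTFinset ν r) {c d : Cell ν}
    (h1 : (d.1.1 : ℕ) = (c.1.1 : ℕ) + 1) (h2 : d.1.2 = c.1.2)
    (hfree : IsFree a b τ c) : (b : ℕ) < (τ d : ℕ) := by
  have hlt : τ c < τ d := col_strict hτ h2.symm (Fin.lt_def.2 (by omega))
  rw [Fin.lt_def] at hlt
  rcases hfree with ⟨hca, hnb⟩ | ⟨hcb, _⟩
  · have hne : τ d ≠ b := fun h => hnb ((hasBelowB_iff h1 h2).2 h)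
    have hca' := Fin.ext_iff.1 hca
    have hne' : (τ d : ℕ) ≠ (b : ℕ) := fun h => hne (Fin.ext h)
    omega
  · have hcb' := Fin.ext_iff.1 hcb
    omega

lemma above_val_small (hab : (a : ℕ) + 1 = b) (hτ : τ ∈ SSTFinset ν r) {c d : Cell ν}
    (h1 : (c.1.1 : ℕ) = (d.1.1 : ℕ) + 1) (h2 : d.1.2 = c.1.2)
    (hfree : IsFree a b τ c) : (τ d : ℕ) < (a : ℕ) := by
  have hlt : τ d < τ c := col_strict hτ h2 (Fin.lt_def.2 (by omega))
  rw [Fin.lt_def] at hlt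
  rcases hfree with ⟨hca, _⟩ | ⟨hcb, hna⟩
  · have := Fin.ext_iff.1 hca
    omega
  · have hne : τ d ≠ a := fun h => hna ((hasAboveA_iff h1 h2).2 h)
    have hcb' := Fin.ext_iff.1 hcb
    have hne' : (τ d : ℕ) ≠ (a : ℕ) := fun h => hne (Fin.ext h)
    omega

lemma locked_a_left (hab : (a : ℕ) + 1 = b) (hτ : τ ∈ SSTFinset ν r) {c d : Cell ν}
    (hrow : c.1.1 = d.1.1) (hcol : c.1.2 ≤ d.1.2)
    (hc : τ c = a) (hd : HasBelowB b τ d) : HasBelowB b τ c := by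
  obtain ⟨e, he1, he2, he3⟩ := hd
  have hrv := Fin.ext_iff.1 hrow
  have hcell : c.1.2 < ν e.1.1 := lt_of_le_of_lt (hcol.trans (le_of_eq he2.symm)) (cell_mem e)
  refine ⟨mkCell ν e.1.1 c.1.2 hcell, by show (e.1.1 : ℕ) = (c.1.1 : ℕ) + 1; omega, rfl, ?_⟩
  have h1 : τ (mkCell ν e.1.1 c.1.2 hcell) ≤ τ e :=
    row_mono hτ rfl (by show c.1.2 ≤ e.1.2; rw [he2]; exact hcol)
  have h2 : τ c < τ (mkCell ν e.1.1 c.1.2 hcell) :=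
    col_strict hτ rfl (Fin.lt_def.2 (by show (c.1.1 : ℕ) < (e.1.1 : ℕ); omega))
  rw [hc] at h2
  rw [Fin.lt_def] at h2
  rw [Fin.le_def] at h1
  have hb3 := Fin.ext_iff.1 he3
  exact Fin.ext (by omega)

lemma free_b_left (hν : Antitone ν) (hab : (a : ℕ) + 1 = b) (hτ : τ ∈ SSTFinset ν r)
    {c d : Cell ν} (hrow : c.1.1 = d.1.1) (hcol : c.1.2 ≤ d.1.2)
    (hd : τ d = b) (hc : HasAboveA a τ c) : HasAboveA a τ d := by
  obtain ⟨e, he1, he2, he3⟩ := hc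
  have hrv := Fin.ext_iff.1 hrow
  have hrowle : e.1.1 ≤ d.1.1 := Fin.le_def.2 (by omega)
  have hcell : d.1.2 < ν e.1.1 := lt_of_lt_of_le (cell_mem d) (hν hrowle)
  refine ⟨mkCell ν e.1.1 d.1.2 hcell, by show (d.1.1 : ℕ) = (e.1.1 : ℕ) + 1; omega, rfl, ?_⟩
  have h1 : τ e ≤ τ (mkCell ν e.1.1 d.1.2 hcell) :=
    row_mono hτ rfl (by show e.1.2 ≤ d.1.2; rw [he2]; exact hcol)
  have h2 : τ (mkCell ν e.1.1 d.1.2 hcell) < τ d :=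
    col_strict hτ rfl (Fin.lt_def.2 (by show (e.1.1 : ℕ) < (d.1.1 : ℕ); omega))
  have hv1 := Fin.ext_iff.1 he3
  have hv2 := Fin.ext_iff.1 hd
  rw [Fin.le_def] at h1
  rw [Fin.lt_def] at h2
  exact Fin.ext (by omega)

lemma mem_freeRow_iff {c : Cell ν} {R : Fin r} :
    c ∈ freeRow a b τ R ↔ c.1.1 = R ∧ IsFree a b τ c := by
  rw [freeRow, Finset.mem_filter]
  simp

lemma free_val_iff (hab : (a : ℕ) + 1 = b) (hτ : τ ∈ SSTFinset ν r) {R : Fin r} {c : Cell ν}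
    (hc : c ∈ freeRow a b τ R) :
    τ c = a ↔ xIdx a b τ c < faCnt a b τ R := by
  obtain ⟨hcR, hcf⟩ := mem_freeRow_iff.1 hc
  have hxc : xIdx a b τ c = ((freeRow a b τ R).filter fun d => d.1.2 < c.1.2).card := by
    rw [xIdx, hcR]
  have hforward : τ c = a → ((freeRow a b τ R).filter fun d => d.1.2 < c.1.2) ⊂
      ((freeRow a b τ R).filter fun d => τ d = a) := by
    intro hca
    rw [Finset.ssubset_def]
    constructor
    · intro d hd
      rw [Finset.mem_filter] at hd ⊢
      obtain ⟨hdm, hdlt⟩ := hd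
      obtain ⟨hdR, hdf⟩ := mem_freeRow_iff.1 hdm
      have hle : τ d ≤ τ c := row_mono hτ (hdR.trans hcR.symm) (le_of_lt hdlt)
      refine ⟨hdm, ?_⟩
      rcases free_val hdf with h | h
      · exact h
      · exfalso
        rw [h, hca] at hle
        rw [Fin.le_def] at hle
        omega
    · intro hsub
      have := hsub (Finset.mem_filter.2 ⟨hc, hca⟩)
      rw [Finset.mem_filter] at this
      omega
  have hback : τ c = b → ((freeRow a b τ R).filter fun d => τ d = a) ⊆
      ((freeRow a b τ R).filter fun d => d.1.2 < c.1.2) := by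
    intro hcb d hd
    rw [Finset.mem_filter] at hd ⊢
    obtain ⟨hdm, hda⟩ := hd
    obtain ⟨hdR, _⟩ := mem_freeRow_iff.1 hdm
    refine ⟨hdm, ?_⟩
    rcases lt_trichotomy d.1.2 c.1.2 with h | h | h
    · exact h
    · exfalso
      have hdc : d = c := cell_ext (hdR.trans hcR.symm) h
      rw [hdc, hcb] at hda
      exact absurd (Fin.ext_iff.1 hda) (by omega)
    · exfalso
      have hle : τ c ≤ τ d := row_mono hτ (hcR.trans hdR.symm) (le_of_lt h)
      rw [hcb, hda] at hle
      rw [Fin.le_def] at hle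
      omega
  rcases free_val hcf with h | h
  · refine ⟨fun _ => ?_, fun _ => h⟩
    rw [hxc, faCnt]
    exact Finset.card_lt_card (hforward h)
  · constructor
    · intro ha
      exfalso
      rw [ha] at h
      exact absurd (Fin.ext_iff.1 h) (by omega)
    · intro hx
      exfalso
      have hcard := Finset.card_le_card (hback h)
      rw [faCnt] at hx
      omega
  
lemma free_count (hab : (a : ℕ) + 1 = b) {R : Fin r} :
    faCnt a b τ R + fbCnt a b τ R = (freeRow a b τ R).card := by
  rw [faCnt, fbCnt, ← Finset.card_filter_add_card_filter_not
    (s := freeRow a b τ R) (p := fun d => τ d = a)]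
  congr 1
  congr 1
  apply Finset.filter_congr
  intro d hd
  obtain ⟨_, hdf⟩ := mem_freeRow_iff.1 hd
  constructor
  · intro hb ha
    rw [ha] at hb
    exact absurd (Fin.ext_iff.1 hb) (by omega)
  · intro hna
    rcases free_val hdf with h | h
    · exact absurd h hna
    · exact h

lemma xIdx_card {R : Fin r} {k : ℕ} (hk : k ≤ (freeRow a b τ R).card) :
    ((freeRow a b τ R).filter fun c => xIdx a b τ c < k).card = k := by
  set s := freeRow a b τ R with hs
  have hx : ∀ c ∈ s, xIdx a b τ c = (s.filter fun d => d.1.2 < c.1.2).card := by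
    intro c hc
    rw [xIdx, (mem_freeRow_iff.1 hc).1]
  have hmono : ∀ c ∈ s, ∀ d ∈ s, c.1.2 < d.1.2 → xIdx a b τ c < xIdx a b τ d := by
    intro c hc d hd hcd
    rw [hx c hc, hx d hd]
    apply Finset.card_lt_card
    rw [Finset.ssubset_def]
    constructor
    · intro e he
      rw [Finset.mem_filter] at he ⊢
      exact ⟨he.1, he.2.trans hcd⟩
    · intro hsub
      have := hsub (Finset.mem_filter.2 ⟨hc, hcd⟩)
      rw [Finset.mem_filter] at this
      omega
  have hinj : Set.InjOn (xIdx a b τ) ↑s := by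
    intro c hc d hd heq
    rw [Finset.mem_coe] at hc hd
    rcases lt_trichotomy c.1.2 d.1.2 with h | h | h
    · exact absurd heq (ne_of_lt (hmono c hc d hd h))
    · exact cell_ext ((mem_freeRow_iff.1 hc).1.trans (mem_freeRow_iff.1 hd).1.symm) h
    · exact absurd heq.symm (ne_of_lt (hmono d hd c hc h))
  have hbound : ∀ c ∈ s, xIdx a b τ c < s.card := by
    intro c hc
    rw [hx c hc]
    apply Finset.card_lt_card
    rw [Finset.ssubset_def]
    constructor
    · exact Finset.filter_subset _ _
    · intro hsub
      have := hsub hc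
      rw [Finset.mem_filter] at this
      omega
  have himg : s.image (xIdx a b τ) = Finset.range s.card := by
    apply Finset.eq_of_subset_of_card_le
    · intro y hy
      rw [Finset.mem_image] at hy
      obtain ⟨c, hc, rfl⟩ := hy
      exact Finset.mem_range.2 (hbound c hc)
    · rw [Finset.card_range, Finset.card_image_of_injOn hinj]
  have hcard : ((s.image (xIdx a b τ)).filter fun y => y < k).card =
      (s.filter fun c => xIdx a b τ c < k).card := by
    rw [Finset.filter_image,
      Finset.card_image_of_injOn (hinj.mono (Finset.coe_subset.2 (Finset.filter_subset _ _)))]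
  rw [← hcard, himg]
  rw [show (Finset.range s.card).filter (fun y => y < k) = Finset.range k from by
    ext y
    simp only [Finset.mem_filter, Finset.mem_range]
    omega]
  exact Finset.card_range k

lemma bk_of_not_free {c : Cell ν} (h : ¬IsFree a b τ c) : bk a b τ c = τ c := if_neg h

lemma bk_of_free {c : Cell ν} (h : IsFree a b τ c) :
    bk a b τ c = if xIdx a b τ c < fbCnt a b τ c.1.1 then a else b := if_pos h

lemma bk_mem_ab {c : Cell ν} (h : IsFree a b τ c) : bk a b τ c = a ∨ bk a b τ c = b := by
  rw [bk_of_free h]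
  split_ifs <;> simp

lemma bk_eq_other (hab : (a : ℕ) + 1 = b) {c : Cell ν} {v : Fin r} (hva : v ≠ a) (hvb : v ≠ b) :
    bk a b τ c = v ↔ τ c = v := by
  by_cases h : IsFree a b τ c
  · rw [bk_of_free h]
    constructor
    · intro hv
      split_ifs at hv
      · exact absurd hv.symm hva
      · exact absurd hv.symm hvb
    · intro hv
      exfalso
      rcases free_val h with h' | h' <;> rw [hv] at h'
      · exact hva h'
      · exact hvb h'
  · rw [bk_of_not_free h]

lemma bk_mem_SST (hν : Antitone ν) (hab : (a : ℕ) + 1 = b) (hτ : τ ∈ SSTFinset ν r) :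
    bk a b τ ∈ SSTFinset ν r := by
  apply SST_of_adjacent hν
  · -- rows
    intro c d h1 h2
    have hle : τ c ≤ τ d := row_mono hτ h1 (by omega)
    by_cases hc : IsFree a b τ c <;> by_cases hd : IsFree a b τ d
    · rw [bk_of_free hc, bk_of_free hd]
      have hfb : fbCnt a b τ d.1.1 = fbCnt a b τ c.1.1 := by rw [h1]
      have hxle : xIdx a b τ c ≤ xIdx a b τ d := by
        rw [xIdx, xIdx, ← h1]
        apply Finset.card_le_card
        intro e he
        rw [Finset.mem_filter] at he ⊢
        exact ⟨he.1, by omega⟩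
      by_cases hx : xIdx a b τ c < fbCnt a b τ c.1.1
      · rw [if_pos hx]
        split_ifs <;> rw [Fin.le_def] <;> omega
      · rw [if_neg hx, if_neg (by rw [hfb]; omega : ¬ xIdx a b τ d < fbCnt a b τ d.1.1)]
    · rw [bk_of_free hc, bk_of_not_free hd]
      by_cases hda : τ d = a
      · exfalso
        have hca : τ c = a := by
          rcases free_val hc with h | h
          · exact h
          · exfalso
            rw [h, hda] at hle
            rw [Fin.le_def] at hle
            omega
        have hbelow : HasBelowB b τ d := (not_free_iff.1 hd).1 hda
        have hbc : HasBelowB b τ c := locked_a_left hab hτ h1 (by omega) hca hbelow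
        rcases hc with ⟨_, hnb⟩ | ⟨hcb, _⟩
        · exact hnb hbc
        · rw [hca] at hcb
          exact absurd (Fin.ext_iff.1 hcb) (by omega)
      · by_cases hdb : τ d = b
        · rw [hdb]
          split_ifs <;> rw [Fin.le_def] <;> omega
        · have hge : (a : ℕ) ≤ (τ c : ℕ) := by
            rcases free_val hc with h | h <;> (have := Fin.ext_iff.1 h; omega)
          have hda' : (τ d : ℕ) ≠ (a : ℕ) := fun h => hda (Fin.ext h)
          have hdb' : (τ d : ℕ) ≠ (b : ℕ) := fun h => hdb (Fin.ext h)
          rw [Fin.le_def] at hle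
          split_ifs <;> rw [Fin.le_def] <;> omega
    · rw [bk_of_not_free hc, bk_of_free hd]
      by_cases hcb : τ c = b
      · exfalso
        have hdb : τ d = b := by
          rcases free_val hd with h | h
          · exfalso
            rw [hcb, h] at hle
            rw [Fin.le_def] at hle
            omega
          · exact h
        have habove : HasAboveA a τ c := (not_free_iff.1 hc).2 hcb
        have had : HasAboveA a τ d := free_b_left hν hab hτ h1 (by omega) hdb habove
        rcases hd with ⟨hda, _⟩ | ⟨_, hna⟩
        · rw [hdb] at hda
          exact absurd (Fin.ext_iff.1 hda) (by omega)
        · exact hna had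
      · by_cases hca : τ c = a
        · rw [hca]
          split_ifs <;> rw [Fin.le_def] <;> omega
        · have hlb : (τ d : ℕ) ≤ (b : ℕ) := by
            rcases free_val hd with h | h <;> (have := Fin.ext_iff.1 h; omega)
          have hca' : (τ c : ℕ) ≠ (a : ℕ) := fun h => hca (Fin.ext h)
          have hcb' : (τ c : ℕ) ≠ (b : ℕ) := fun h => hcb (Fin.ext h)
          rw [Fin.le_def] at hle
          split_ifs <;> rw [Fin.le_def] <;> omega
    · rw [bk_of_not_free hc, bk_of_not_free hd]
      exact hle
  · -- columns
    intro c d h1 h2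
    have hlt : τ c < τ d := col_strict hτ h1 (Fin.lt_def.2 (by omega))
    rw [Fin.lt_def] at hlt
    by_cases hc : IsFree a b τ c <;> by_cases hd : IsFree a b τ d
    · exfalso
      have hbig := below_val_large hab hτ h2 h1.symm hc
      have hlb : (τ d : ℕ) ≤ (b : ℕ) := by
        rcases free_val hd with h | h <;> (have := Fin.ext_iff.1 h; omega)
      omega
    · rw [bk_of_free hc, bk_of_not_free hd]
      have hbig := below_val_large hab hτ h2 h1.symm hc
      split_ifs <;> rw [Fin.lt_def] <;> omega
    · rw [bk_of_not_free hc, bk_of_free hd]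
      have hsmall := above_val_small hab hτ h2 h1 hd
      split_ifs <;> rw [Fin.lt_def] <;> omega
    · rw [bk_of_not_free hc, bk_of_not_free hd]
      exact Fin.lt_def.2 hlt

lemma isFree_bk_iff (hν : Antitone ν) (hab : (a : ℕ) + 1 = b) (hτ : τ ∈ SSTFinset ν r)
    (c : Cell ν) : IsFree a b (bk a b τ) c ↔ IsFree a b τ c := by
  constructor
  · intro hfc'
    by_contra h
    have hbkc : bk a b τ c = τ c := bk_of_not_free h
    rcases free_val hfc' with hval | hval <;> rw [hbkc] at hval
    · obtain ⟨e, he1, he2, he3⟩ := (not_free_iff.1 h).1 hval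
      have heA : HasAboveA a τ e := ⟨c, he1, he2.symm, hval⟩
      have henf : ¬IsFree a b τ e := by
        rintro (⟨hea, _⟩ | ⟨_, hna⟩)
        · rw [he3] at hea
          exact absurd (Fin.ext_iff.1 hea) (by omega)
        · exact hna heA
      have hbe : bk a b τ e = b := by
        rw [bk_of_not_free henf]
        exact he3
      rcases hfc' with ⟨_, hnb⟩ | ⟨hcb, _⟩
      · exact hnb ⟨e, he1, he2, hbe⟩
      · rw [hbkc, hval] at hcb
        exact absurd (Fin.ext_iff.1 hcb) (by omega)
    · obtain ⟨e, he1, he2, he3⟩ := (not_free_iff.1 h).2 hval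
      have heB : HasBelowB b τ e := ⟨c, he1, he2.symm, hval⟩
      have henf : ¬IsFree a b τ e := by
        rintro (⟨_, hnb⟩ | ⟨heb, _⟩)
        · exact hnb heB
        · rw [he3] at heb
          exact absurd (Fin.ext_iff.1 heb) (by omega)
      have hbe : bk a b τ e = a := by
        rw [bk_of_not_free henf]
        exact he3
      rcases hfc' with ⟨hca, _⟩ | ⟨_, hna⟩
      · rw [hbkc, hval] at hca
        exact absurd (Fin.ext_iff.1 hca) (by omega)
      · exact hna ⟨e, he1, he2, hbe⟩
  · intro hfc
    rcases bk_mem_ab hfc with hval | hval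
    · left
      refine ⟨hval, ?_⟩
      rintro ⟨e, he1, he2, he3⟩
      have hbig := below_val_large hab hτ he1 he2 hfc
      have hef : ¬IsFree a b τ e := by
        intro hf
        rcases free_val hf with h' | h' <;> (have := Fin.ext_iff.1 h'; omega)
      rw [bk_of_not_free hef] at he3
      have := Fin.ext_iff.1 he3
      omega
    · right
      refine ⟨hval, ?_⟩
      rintro ⟨e, he1, he2, he3⟩
      have hsmall := above_val_small hab hτ he1 he2 hfc
      have hef : ¬IsFree a b τ e := by
        intro hf
        rcases free_val hf with h' | h' <;> (have := Fin.ext_iff.1 h'; omega)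
      rw [bk_of_not_free hef] at he3
      have := Fin.ext_iff.1 he3
      omega

lemma freeRow_bk (hν : Antitone ν) (hab : (a : ℕ) + 1 = b) (hτ : τ ∈ SSTFinset ν r) (R : Fin r) :
    freeRow a b (bk a b τ) R = freeRow a b τ R := by
  ext c
  simp only [mem_freeRow_iff]
  exact and_congr_right fun _ => isFree_bk_iff hν hab hτ c

lemma card_bk_eq_a (hab : (a : ℕ) + 1 = b) (hτ : τ ∈ SSTFinset ν r) (R : Fin r) :
    ((freeRow a b τ R).filter fun d => bk a b τ d = a).card = fbCnt a b τ R := by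
  have hfil : ((freeRow a b τ R).filter fun d => bk a b τ d = a) =
      ((freeRow a b τ R).filter fun d => xIdx a b τ d < fbCnt a b τ R) := by
    apply Finset.filter_congr
    intro d hd
    obtain ⟨hdR, hdf⟩ := mem_freeRow_iff.1 hd
    rw [bk_of_free hdf, hdR]
    split_ifs with h
    · simp [h]
    · simp only [h, iff_false]
      intro hba
      exact absurd (Fin.ext_iff.1 hba) (by omega)
  rw [hfil]
  exact xIdx_card (Finset.card_filter_le _ _)

lemma card_bk_eq_b (hab : (a : ℕ) + 1 = b) (hτ : τ ∈ SSTFinset ν r) (R : Fin r) :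
    ((freeRow a b τ R).filter fun d => bk a b τ d = b).card = faCnt a b τ R := by
  have h1 := Finset.card_filter_add_card_filter_not (s := freeRow a b τ R)
      (p := fun d => bk a b τ d = a)
  have h2 : ((freeRow a b τ R).filter fun d => ¬ bk a b τ d = a) =
      ((freeRow a b τ R).filter fun d => bk a b τ d = b) := by
    apply Finset.filter_congr
    intro d hd
    obtain ⟨_, hdf⟩ := mem_freeRow_iff.1 hd
    rcases bk_mem_ab hdf with h | h <;> rw [h]
    · simp only [not_true, false_iff]
      intro hba
      exact absurd (Fin.ext_iff.1 hba) (by omega)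
    · simp only [iff_true]
      intro hba
      exact absurd (Fin.ext_iff.1 hba) (by omega)
  rw [h2] at h1
  have h3 := card_bk_eq_a hab hτ R
  have h4 := free_count (τ := τ) hab (R := R)
  omega

lemma fbCnt_bk (hν : Antitone ν) (hab : (a : ℕ) + 1 = b) (hτ : τ ∈ SSTFinset ν r) (R : Fin r) :
    fbCnt a b (bk a b τ) R = faCnt a b τ R := by
  rw [fbCnt, freeRow_bk hν hab hτ]
  exact card_bk_eq_b hab hτ R

lemma bk_invol (hν : Antitone ν) (hab : (a : ℕ) + 1 = b) (hτ : τ ∈ SSTFinset ν r) :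
    bk a b (bk a b τ) = τ := by
  funext c
  by_cases h : IsFree a b τ c
  · have h' : IsFree a b (bk a b τ) c := (isFree_bk_iff hν hab hτ c).2 h
    rw [bk_of_free h']
    have hx : xIdx a b (bk a b τ) c = xIdx a b τ c := by
      rw [xIdx, xIdx, freeRow_bk hν hab hτ]
    rw [hx, fbCnt_bk hν hab hτ]
    have hcm : c ∈ freeRow a b τ c.1.1 := mem_freeRow_iff.2 ⟨rfl, h⟩
    have hiff := free_val_iff hab hτ hcm
    by_cases hxa : xIdx a b τ c < faCnt a b τ c.1.1
    · rw [if_pos hxa]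
      exact (hiff.2 hxa).symm
    · rw [if_neg hxa]
      rcases free_val h with h' | h'
      · exact absurd (hiff.1 h') hxa
      · exact h'.symm
  · have h' : ¬IsFree a b (bk a b τ) c := fun hf => h ((isFree_bk_iff hν hab hτ c).1 hf)
    rw [bk_of_not_free h', bk_of_not_free h]

lemma locked_card (hab : (a : ℕ) + 1 = b) :
    ((Finset.univ : Finset (Cell ν)).filter fun c => τ c = a ∧ HasBelowB b τ c).card =
    ((Finset.univ : Finset (Cell ν)).filter fun c => τ c = b ∧ HasAboveA a τ c).card := by
  apply Finset.card_bij (fun c hc => ((Finset.mem_filter.1 hc).2.2).choose)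
  · intro c hc
    obtain ⟨h1, h2, h3⟩ := ((Finset.mem_filter.1 hc).2.2).choose_spec
    rw [Finset.mem_filter]
    exact ⟨Finset.mem_univ _, h3, ⟨c, h1, h2.symm, (Finset.mem_filter.1 hc).2.1⟩⟩
  · intro c1 h1 c2 h2 heq
    obtain ⟨a1, b1, _⟩ := ((Finset.mem_filter.1 h1).2.2).choose_spec
    obtain ⟨a2, b2, _⟩ := ((Finset.mem_filter.1 h2).2.2).choose_spec
    rw [heq] at a1 b1
    exact cell_ext (Fin.ext (by omega)) (b1.symm.trans b2)
  · intro d hd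
    obtain ⟨hdb, e, he1, he2, he3⟩ := (Finset.mem_filter.1 hd).2
    have hem : e ∈ Finset.univ.filter fun c : Cell ν => τ c = a ∧ HasBelowB b τ c := by
      rw [Finset.mem_filter]
      exact ⟨Finset.mem_univ _, he3, ⟨d, he1, he2.symm, hdb⟩⟩
    refine ⟨e, hem, ?_⟩
    obtain ⟨f1, f2, f3⟩ := ((Finset.mem_filter.1 hem).2.2).choose_spec
    exact cell_ext (Fin.ext (by omega)) (f2.trans he2)

lemma count_split (Q P : Cell ν → Prop) [DecidablePred Q] [DecidablePred P] :
    ((Finset.univ : Finset (Cell ν)).filter P).card =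
      (Finset.univ.filter fun c : Cell ν => Q c ∧ P c).card +
      (Finset.univ.filter fun c : Cell ν => ¬Q c ∧ P c).card := by
  rw [← Finset.card_filter_add_card_filter_not (p := Q)
    (s := (Finset.univ : Finset (Cell ν)).filter P)]
  rw [Finset.filter_filter, Finset.filter_filter]
  congr 1
  · congr 1
    ext c
    simp only [Finset.mem_filter, Finset.mem_univ, true_and]
    tauto
  · congr 1
    ext c
    simp only [Finset.mem_filter, Finset.mem_univ, true_and]
    tauto

lemma card_free_filter (G : Cell ν → Prop) [DecidablePred G] :
    (Finset.univ.filter fun c : Cell ν => IsFree a b τ c ∧ G c).card =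
      ∑ R : Fin r, ((freeRow a b τ R).filter fun c => G c).card := by
  rw [Finset.card_eq_sum_card_fiberwise (f := fun c : Cell ν => c.1.1)
    (t := Finset.univ) (fun c _ => Finset.mem_univ _)]
  apply Finset.sum_congr rfl
  intro R _
  congr 1
  ext c
  simp only [Finset.mem_filter, Finset.mem_univ, true_and, freeRow]
  tauto

lemma lockA' (hab : (a : ℕ) + 1 = b) :
    ((Finset.univ : Finset (Cell ν)).filter fun c => ¬IsFree a b τ c ∧ τ c = a) =
      (Finset.univ.filter fun c : Cell ν => τ c = a ∧ HasBelowB b τ c) := by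
  ext c
  simp only [Finset.mem_filter, Finset.mem_univ, true_and]
  constructor
  · rintro ⟨hnf, hca⟩
    exact ⟨hca, (not_free_iff.1 hnf).1 hca⟩
  · rintro ⟨hca, hbel⟩
    refine ⟨?_, hca⟩
    rintro (⟨_, hnb⟩ | ⟨hcb, _⟩)
    · exact hnb hbel
    · rw [hca] at hcb
      exact absurd (Fin.ext_iff.1 hcb) (by omega)

lemma lockB' (hab : (a : ℕ) + 1 = b) :
    ((Finset.univ : Finset (Cell ν)).filter fun c => ¬IsFree a b τ c ∧ τ c = b) =
      (Finset.univ.filter fun c : Cell ν => τ c = b ∧ HasAboveA a τ c) := by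
  ext c
  simp only [Finset.mem_filter, Finset.mem_univ, true_and]
  constructor
  · rintro ⟨hnf, hcb⟩
    exact ⟨hcb, (not_free_iff.1 hnf).2 hcb⟩
  · rintro ⟨hcb, habo⟩
    refine ⟨?_, hcb⟩
    rintro (⟨hca, _⟩ | ⟨_, hna⟩)
    · rw [hcb] at hca
      exact absurd (Fin.ext_iff.1 hca) (by omega)
    · exact hna habo

lemma lockEq (w : Fin r) :
    ((Finset.univ : Finset (Cell ν)).filter fun c => ¬IsFree a b τ c ∧ bk a b τ c = w) =
      (Finset.univ.filter fun c : Cell ν => ¬IsFree a b τ c ∧ τ c = w) := by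
  ext c
  simp only [Finset.mem_filter, Finset.mem_univ, true_and]
  constructor
  · rintro ⟨hnf, hw⟩
    rw [bk_of_not_free hnf] at hw
    exact ⟨hnf, hw⟩
  · rintro ⟨hnf, hw⟩
    exact ⟨hnf, by rw [bk_of_not_free hnf]; exact hw⟩

lemma wt_bk (hν : Antitone ν) (hab : (a : ℕ) + 1 = b) (hτ : τ ∈ SSTFinset ν r) :
    wt ν (bk a b τ) = wt ν (⇑(Equiv.swap a b) ∘ τ) := by
  ext v
  rw [wt_apply, wt_apply]
  have hswap : (Finset.univ.filter fun c : Cell ν => (⇑(Equiv.swap a b) ∘ τ) c = v) =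
      (Finset.univ.filter fun c : Cell ν => τ c = Equiv.swap a b v) := by
    apply Finset.filter_congr
    intro c _
    show Equiv.swap a b (τ c) = v ↔ τ c = Equiv.swap a b v
    constructor
    · intro h
      rw [← h, Equiv.swap_apply_self]
    · intro h
      rw [h, Equiv.swap_apply_self]
  rw [hswap]
  by_cases hva : v = a
  · rw [hva, Equiv.swap_apply_left]
    rw [count_split (IsFree a b τ) (fun c => bk a b τ c = a),
      count_split (IsFree a b τ) (fun c => τ c = b)]
    congr 1
    · rw [card_free_filter, card_free_filter]
      apply Finset.sum_congr rfl
      intro R _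
      rw [card_bk_eq_a hab hτ R, fbCnt]
    · rw [lockEq, lockA' hab, lockB' hab]
      exact locked_card hab
  · by_cases hvb : v = b
    · rw [hvb, Equiv.swap_apply_right]
      rw [count_split (IsFree a b τ) (fun c => bk a b τ c = b),
        count_split (IsFree a b τ) (fun c => τ c = a)]
      congr 1
      · rw [card_free_filter, card_free_filter]
        apply Finset.sum_congr rfl
        intro R _
        rw [card_bk_eq_b hab hτ R, faCnt]
      · rw [lockEq, lockB' hab, lockA' hab]
        exact (locked_card hab).symm
    · rw [Equiv.swap_apply_of_ne_of_ne hva hvb]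
      congr 1
      apply Finset.filter_congr
      intro c _
      exact bk_eq_other hab hva hvb

lemma wt_comp (f : Fin r → Fin r) (τ : Cell ν → Fin r) :
    wt ν (f ∘ τ) = Finsupp.mapDomain f (wt ν τ) := by
  rw [wt, wt, Finsupp.mapDomain_finset_sum]
  apply Finset.sum_congr rfl
  intro c _
  rw [Finsupp.mapDomain_single]
  rfl

lemma prod_X_wt (τ : Cell ν → Fin r) :
    (∏ c : Cell ν, (X (τ c) : MvPolynomial (Fin r) ℤ)) = monomial (wt ν τ) 1 :=
  prod_X_eq τ

lemma rename_swap_schurP (hν : Antitone ν) (hab : (a : ℕ) + 1 = b) :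
    rename (⇑(Equiv.swap a b)) (schurP ν r ℤ) = schurP ν r ℤ := by
  rw [schurP, map_sum]
  have h1 : ∀ τ : Cell ν → Fin r,
      (rename ⇑(Equiv.swap a b)) (∏ c : Cell ν, (X (τ c) : MvPolynomial (Fin r) ℤ)) =
      monomial (wt ν (⇑(Equiv.swap a b) ∘ τ)) 1 := by
    intro τ
    rw [prod_X_wt, rename_monomial, wt_comp]
  rw [Finset.sum_congr rfl fun τ _ => h1 τ,
    Finset.sum_congr rfl fun τ (_ : τ ∈ SSTFinset ν r) => prod_X_wt τ]
  refine Finset.sum_nbij' (i := bk a b) (j := bk a b) ?_ ?_ ?_ ?_ ?_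
  · intro τ hτ
    exact bk_mem_SST hν hab hτ
  · intro τ hτ
    exact bk_mem_SST hν hab hτ
  · intro τ hτ
    exact bk_invol hν hab hτ
  · intro τ hτ
    exact bk_invol hν hab hτ
  · intro τ hτ
    rw [wt_bk hν hab hτ]

end BK

theorem schurP_symmetric {ν : Fin r → ℕ} (hν : Antitone ν) :
    (schurP ν r ℤ).IsSymmetric := by
  cases r with
  | zero =>
    intro σ
    have hσ : σ = 1 := by
      ext x
      exact x.elim0
    rw [hσ, show ⇑(1 : Equiv.Perm (Fin 0)) = id from rfl, rename_id, AlgHom.id_apply]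
  | succ n =>
    intro σ
    have hσ : σ ∈ Submonoid.closure (Set.range fun i : Fin n => Equiv.swap i.castSucc i.succ) := by
      rw [Equiv.Perm.mclosure_swap_castSucc_succ]
      exact Submonoid.mem_top σ
    induction hσ using Submonoid.closure_induction with
    | mem σ' hσ' =>
      obtain ⟨i, rfl⟩ := hσ'
      exact rename_swap_schurP hν (by simp)
    | one =>
      rw [show ⇑(1 : Equiv.Perm (Fin (n + 1))) = id from rfl, rename_id, AlgHom.id_apply]
    | mul σ₁ σ₂ h₁ h₂ ih₁ ih₂ =>
      rw [show ⇑(σ₁ * σ₂) = ⇑σ₁ ∘ ⇑σ₂ from rfl, ← rename_rename, ih₂, ih₁]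

end S11

namespace S11

/-- Abstract triangularity argument: a family whose image under an injective linear map
to finsupps is unitriangular with respect to a "measure-decreasing" relation is a basis. -/
lemma basis_of_triangular {ι M : Type*} [AddCommGroup M] [Module ℤ M]
    (Φ : M →ₗ[ℤ] (ι →₀ ℤ)) (hΦ : Function.Injective Φ) (g : ι → M)
    (m : ι → ℕ) (lt : ι → ι → Prop)
    (hdiag : ∀ ν, Φ (g ν) ν = 1)
    (htri : ∀ ν μ, Φ (g ν) μ ≠ 0 → μ = ν ∨ lt μ ν)
    (hm : ∀ μ ν, lt μ ν → m μ < m ν) :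
    ∃ b : Module.Basis ι ℤ M, ∀ ν, b ν = g ν := by
  classical
  set K : ι → (ι →₀ ℤ) := fun ν => Φ (g ν) with hKdef
  have hKdiag : ∀ ν, K ν ν = 1 := hdiag
  have hKtri : ∀ ν μ, K ν μ ≠ 0 → μ = ν ∨ lt μ ν := htri
  have hind : LinearIndependent ℤ (⇑Φ ∘ g) := by
    rw [linearIndependent_iff]
    intro l hl
    by_contra hne
    obtain ⟨ν₀, hν₀, hmax⟩ := Finset.exists_max_image l.support m
      (Finsupp.support_nonempty_iff.2 hne)
    have h0 := congrArg (fun w : ι →₀ ℤ => w ν₀) hl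
    simp only [Finsupp.linearCombination_apply, Finsupp.sum, Finsupp.finset_sum_apply,
      Finsupp.smul_apply, Finsupp.coe_zero, Pi.zero_apply] at h0
    have hterm : ∀ ν ∈ l.support, ν ≠ ν₀ → l ν • (⇑Φ ∘ g) ν ν₀ = 0 := by
      intro ν hν hne'
      rcases eq_or_ne (K ν ν₀) 0 with h | h
      · rw [show (⇑Φ ∘ g) ν ν₀ = K ν ν₀ from rfl, h, smul_zero]
      · rcases hKtri ν ν₀ h with rfl | hlt
        · exact absurd rfl hne'
        · exact absurd (hmax ν hν) (not_le.2 (hm _ _ hlt))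
    rw [Finset.sum_eq_single ν₀ hterm (fun h => absurd hν₀ h)] at h0
    rw [show (⇑Φ ∘ g) ν₀ ν₀ = K ν₀ ν₀ from rfl, hKdiag ν₀, smul_eq_mul, mul_one] at h0
    exact Finsupp.mem_support_iff.1 hν₀ h0
  have hgind : LinearIndependent ℤ g := hind.of_comp Φ
  have hsingle : ∀ n (ν : ι), m ν = n →
      Finsupp.single ν (1 : ℤ) ∈ Submodule.span ℤ (Set.range K) := by
    intro n
    induction n using Nat.strong_induction_on with
    | _ n ih =>
      intro ν hνn
      have hKν : K ν ∈ Submodule.span ℤ (Set.range K) := Submodule.subset_span ⟨ν, rfl⟩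
      have hsupp : ν ∈ (K ν).support := Finsupp.mem_support_iff.2 (by
        rw [hKdiag]; exact one_ne_zero)
      have h1 : K ν = Finsupp.single ν (1 : ℤ) +
          ∑ μ ∈ (K ν).support.erase ν, Finsupp.single μ (K ν μ) := by
        conv_lhs => rw [← Finsupp.sum_single (K ν)]
        rw [Finsupp.sum, ← Finset.add_sum_erase _ _ hsupp, hKdiag]
      have h2 : Finsupp.single ν (1 : ℤ) = K ν -
          ∑ μ ∈ (K ν).support.erase ν, Finsupp.single μ (K ν μ) :=
        eq_sub_of_add_eq h1.symm
      rw [h2]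
      apply Submodule.sub_mem _ hKν
      apply Submodule.sum_mem
      intro μ hμ
      have hμs := Finset.mem_of_mem_erase hμ
      have hne := Finset.ne_of_mem_erase hμ
      rcases hKtri ν μ (Finsupp.mem_support_iff.1 hμs) with h | h
      · exact absurd h hne
      · have hmem := ih (m μ) (by rw [← hνn]; exact hm _ _ h) μ rfl
        have heq : Finsupp.single μ (K ν μ) = (K ν μ) • Finsupp.single μ (1 : ℤ) := by
          rw [Finsupp.smul_single, smul_eq_mul, mul_one]
        rw [heq]
        exact Submodule.smul_mem _ _ hmem
  have hKtop : Submodule.span ℤ (Set.range K) = ⊤ := by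
    rw [eq_top_iff]
    intro l _
    have hdec : l = ∑ μ ∈ l.support, (l μ) • Finsupp.single μ (1 : ℤ) := by
      conv_lhs => rw [← Finsupp.sum_single l]
      rw [Finsupp.sum]
      apply Finset.sum_congr rfl
      intro μ _
      rw [Finsupp.smul_single, smul_eq_mul, mul_one]
    rw [hdec]
    exact Submodule.sum_mem _ fun μ _ => Submodule.smul_mem _ _ (hsingle _ μ rfl)
  have hgtop : ⊤ ≤ Submodule.span ℤ (Set.range g) := by
    have h1 : Submodule.map Φ (Submodule.span ℤ (Set.range g)) = ⊤ := by
      rw [Submodule.map_span, ← Set.range_comp]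
      exact hKtop
    have h2 : Submodule.map Φ (⊤ : Submodule ℤ M) = ⊤ :=
      eq_top_iff.2 (h1 ▸ Submodule.map_mono le_top)
    exact (Submodule.map_injective_of_injective hΦ (h1.trans h2.symm)).ge
  exact ⟨Module.Basis.mk hgind hgtop, fun ν => Module.Basis.mk_apply hgind hgtop ν⟩

end S11

/-- The Schur polynomials `s_λ(u_1,...,u_r)`, as `λ` ranges over partitions with at most
`r` parts, form a `ℤ`-module basis of the ring `ℤ[u_1,...,u_r]^{S_r}` of symmetric
polynomials in `r` variables. -/
theorem stmt11 (r : ℕ) :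
    ∃ b : Module.Basis {ν : Fin r → ℕ // Antitone ν} ℤ (symmSubmodule r ℤ),
      ∀ ν, (b ν : MvPolynomial (Fin r) ℤ) = schurP ν.1 r ℤ := by
  classical
  obtain ⟨b, hb⟩ := S11.basis_of_triangular S11.Phi S11.Phi_injective
    (fun ν => ⟨schurP ν.1 r ℤ, S11.schurP_symmetric ν.2⟩)
    S11.mMeas (fun μ ν => S11.LtD μ.1 ν.1)
    (fun ν => by rw [S11.Phi_apply]; exact S11.coeff_diag ν.2)
    (fun ν μ h => S11.coeff_triangle h)
    (fun μ ν h => S11.mMeas_lt h)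
  exact ⟨b, fun ν => by rw [hb]⟩

end
end

section
/- For any n ≥ 1 and pairwise distinct elements t_1, ..., t_n of a field, the sum over all permutations (i_1,...,i_n) of {1,...,n} of 1/((t_{i_2}-t_{i_1})(t_{i_3}-t_{i_2})···(t_{i_n}-t_{i_{n-1}})) equals 0 when n ≥ 2, and equals 1 when n = 1. -/
open Finset Polynomial


/-- The product of inverses of consecutive differences `∏_{s} 1/(t_{i_{s+1}} - t_{i_s})`
along a list `(i_1, ..., i_m)`. -/
def consecProd {n : ℕ} {K : Type*} [Field K] (t : Fin n → K) (l : List (Fin n)) : K :=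
  ((l.zip l.tail).map fun p => (t p.2 - t p.1)⁻¹).prod



section Helpers
variable {K : Type*} [Field K]

lemma consecProd_singleton {n : ℕ} (t : Fin n → K) (a : Fin n) : consecProd t [a] = 1 := rfl

lemma consecProd_cons_cons {n : ℕ} (t : Fin n → K) (a b : Fin n) (l : List (Fin n)) :
    consecProd t (a :: b :: l) = (t b - t a)⁻¹ * consecProd t (b :: l) := rfl

lemma consecProd_map {n m : ℕ} (t : Fin n → K) (g : Fin m → Fin n) (l : List (Fin m)) :
    consecProd t (l.map g) = consecProd (t ∘ g) l := by
  induction l with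
  | nil => rfl
  | cons a l ih =>
    cases l with
    | nil => rfl
    | cons b l' =>
      simp only [List.map_cons] at ih ⊢
      rw [consecProd_cons_cons, consecProd_cons_cons, ih]
      rfl

lemma consecProd_cons_map {n m : ℕ} (t : Fin n → K) (a : Fin n) (h : Fin (m + 1) → Fin n) :
    consecProd t (a :: (List.finRange (m + 1)).map h)
      = (t (h 0) - t a)⁻¹ * consecProd (t ∘ h) (List.finRange (m + 1)) := by
  conv_lhs => rw [List.finRange_succ, List.map_cons, consecProd_cons_cons,
    ← List.map_cons, ← List.finRange_succ, consecProd_map]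
end Helpers

section Lag
variable {F : Type*} [Field F] {ι : Type*} [DecidableEq ι]

lemma lag_sum_inv (s : Finset ι) (v : ι → F) (hv : Set.InjOn v s) (hs : s.Nonempty)
    (x : F) (hx : ∀ i ∈ s, x ≠ v i) :
    ∑ i ∈ s, Lagrange.nodalWeight s v i * (x - v i)⁻¹ = (∏ i ∈ s, (x - v i))⁻¹ := by
  have h := Lagrange.eval_interpolate_not_at_node (s := s) (v := v) (x := x) 1 hx
  rw [Lagrange.interpolate_one hv hs, eval_one] at h
  have hnz : eval x (Lagrange.nodal s v) ≠ 0 := Lagrange.eval_nodal_not_at_node hx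
  rw [Lagrange.eval_nodal] at h hnz
  field_simp at h ⊢
  rw [eq_comm] at h
  simpa [mul_comm, Pi.one_apply] using h

lemma lag_sum_weight_zero (s : Finset ι) (v : ι → F) (hv : Set.InjOn v s) (hs : 2 ≤ s.card) :
    ∑ i ∈ s, Lagrange.nodalWeight s v i = 0 := by
  have h := Lagrange.sum_basis hv (card_pos.mp (by omega))
  have h2 := congrArg (fun p => Polynomial.coeff p (s.card - 1)) h
  simp only [Polynomial.finset_sum_coeff] at h2
  rw [Polynomial.coeff_one] at h2
  have : ∀ i ∈ s, (Lagrange.basis s v i).coeff (s.card - 1) = Lagrange.nodalWeight s v i := by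
    intro i hi
    rw [Lagrange.basis_eq_prod_sub_inv_mul_nodal_div hi, ← Lagrange.nodal_erase_eq_nodal_div hi,
      Polynomial.coeff_C_mul]
    have hmd : (Lagrange.nodal (s.erase i) v).natDegree = s.card - 1 := by
      rw [Lagrange.natDegree_nodal, card_erase_of_mem hi]
    rw [← hmd, (Lagrange.nodal_monic).coeff_natDegree, mul_one]
  rw [Finset.sum_congr rfl this] at h2
  rw [h2, if_neg (by omega)]

lemma erase_prod_flip (s : Finset ι) (v : ι → F) {i : ι} (hi : i ∈ s) :
    ∏ j ∈ s.erase i, (v j - v i)⁻¹ = (-1) ^ (s.card - 1) * Lagrange.nodalWeight s v i := by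
  rw [Lagrange.nodalWeight, ← card_erase_of_mem hi, ← prod_const, ← prod_mul_distrib]
  exact prod_congr rfl fun j _ => by rw [neg_one_mul, ← inv_neg, neg_sub]

lemma lagA (s : Finset ι) (v : ι → F) (hv : Set.InjOn v s) (hs : s.Nonempty)
    (x : F) (hx : ∀ i ∈ s, v i ≠ x) :
    ∑ i ∈ s, (v i - x)⁻¹ * ∏ j ∈ s.erase i, (v j - v i)⁻¹ = ∏ i ∈ s, (v i - x)⁻¹ := by
  obtain ⟨k, hk⟩ : ∃ k, s.card = k + 1 :=
    ⟨s.card - 1, by have := hs.card_pos; omega⟩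
  have h := lag_sum_inv s v hv hs x (fun i hi => (hx i hi).symm)
  have hterm : ∀ i ∈ s, (v i - x)⁻¹ * ∏ j ∈ s.erase i, (v j - v i)⁻¹
      = (-1) ^ s.card * (Lagrange.nodalWeight s v i * (x - v i)⁻¹) := by
    intro i hi
    rw [erase_prod_flip s v hi, hk, Nat.add_sub_cancel]
    have h2 : (v i - x)⁻¹ = -1 * (x - v i)⁻¹ := by rw [neg_one_mul, ← inv_neg, neg_sub]
    rw [h2, pow_succ]
    ring
  rw [Finset.sum_congr rfl hterm, ← mul_sum, h]
  have hrhs : ∏ i ∈ s, (v i - x)⁻¹ = (-1) ^ s.card * (∏ i ∈ s, (x - v i))⁻¹ := by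
    rw [← prod_inv_distrib, ← prod_const, ← prod_mul_distrib]
    exact prod_congr rfl fun j _ => by rw [neg_one_mul, ← inv_neg, neg_sub]
  rw [hrhs]

lemma lagB (s : Finset ι) (v : ι → F) (hv : Set.InjOn v s) (hs : 2 ≤ s.card) :
    ∑ i ∈ s, ∏ j ∈ s.erase i, (v j - v i)⁻¹ = 0 := by
  have : ∀ i ∈ s, ∏ j ∈ s.erase i, (v j - v i)⁻¹
      = (-1) ^ (s.card - 1) * Lagrange.nodalWeight s v i := fun i hi => erase_prod_flip s v hi
  rw [Finset.sum_congr rfl this, ← mul_sum, lag_sum_weight_zero s v hv hs, mul_zero]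
end Lag

section Main
variable {K : Type*} [Field K]

/-- The embedding `Fin (m+1) → Fin (m+2)` hitting everything except `p`. -/
def emb {m : ℕ} (p : Fin (m + 2)) : Fin (m + 1) → Fin (m + 2) :=
  fun j => Equiv.swap 0 p j.succ

lemma emb_injective {m : ℕ} (p : Fin (m + 2)) : Function.Injective (emb p) :=
  (Equiv.injective _).comp (Fin.succ_injective _)

lemma emb_ne {m : ℕ} (p : Fin (m + 2)) (a : Fin (m + 1)) : emb p a ≠ p := by
  intro h
  have h0 : Equiv.swap 0 p (0 : Fin (m + 2)) = p := Equiv.swap_apply_left 0 p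
  have := (Equiv.injective (Equiv.swap 0 p)) (h.trans h0.symm)
  exact Fin.succ_ne_zero a this

lemma image_emb {m : ℕ} (p : Fin (m + 2)) :
    (Finset.univ.image (emb p)) = Finset.univ.erase p := by
  apply Finset.eq_of_subset_of_card_le
  · intro b hb
    simp only [mem_image, mem_univ, true_and] at hb
    obtain ⟨a, rfl⟩ := hb
    exact mem_erase.mpr ⟨emb_ne p a, mem_univ _⟩
  · rw [card_erase_of_mem (mem_univ p), card_image_of_injective _ (emb_injective p)]
    simp

lemma prod_emb {m : ℕ} (p : Fin (m + 2)) (g : Fin (m + 2) → K) :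
    ∏ a : Fin (m + 1), g (emb p a) = ∏ b ∈ Finset.univ.erase p, g b := by
  rw [← image_emb p, prod_image fun a _ b _ h => emb_injective p h]

lemma step_sum {m : ℕ} (t : Fin (m + 2) → K) (ht : Function.Injective t)
    (IH : ∀ (u : Fin (m + 1) → K), Function.Injective u → ∀ x : K, (∀ a, u a ≠ x) →
      ∑ σ : Equiv.Perm (Fin (m + 1)),
        (u (σ 0) - x)⁻¹ * consecProd u ((List.finRange (m + 1)).map σ)
        = ∏ a, (u a - x)⁻¹)
    (p : Fin (m + 2)) :
    ∑ σ : Equiv.Perm (Fin (m + 1)),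
      consecProd t ((List.finRange (m + 2)).map (Equiv.Perm.decomposeFin.symm (p, σ)))
      = ∏ b ∈ Finset.univ.erase p, (t b - t p)⁻¹ := by
  have hlist : ∀ σ : Equiv.Perm (Fin (m + 1)),
      (List.finRange (m + 2)).map (Equiv.Perm.decomposeFin.symm (p, σ))
        = p :: (List.finRange (m + 1)).map (emb p ∘ σ) := by
    intro σ
    rw [List.finRange_succ, List.map_cons, List.map_map,
      Equiv.Perm.decomposeFin_symm_apply_zero]
    congr 1
    apply List.map_congr_left
    intro i _
    exact Equiv.Perm.decomposeFin_symm_apply_succ σ p i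
  have hterm : ∀ σ : Equiv.Perm (Fin (m + 1)),
      consecProd t ((List.finRange (m + 2)).map (Equiv.Perm.decomposeFin.symm (p, σ)))
        = ((t ∘ emb p) (σ 0) - t p)⁻¹
            * consecProd (t ∘ emb p) ((List.finRange (m + 1)).map σ) := by
    intro σ
    rw [hlist σ, consecProd_cons_map, consecProd_map]
    rfl
  rw [Finset.sum_congr rfl fun σ _ => hterm σ]
  rw [IH (t ∘ emb p) (ht.comp (emb_injective p)) (t p)
    (fun a => fun h => emb_ne p a (ht h))]
  exact prod_emb p fun b => (t b - t p)⁻¹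

lemma keyG : ∀ (m : ℕ) (t : Fin (m + 1) → K), Function.Injective t →
    ∀ x : K, (∀ a, t a ≠ x) →
    ∑ σ : Equiv.Perm (Fin (m + 1)),
      (t (σ 0) - x)⁻¹ * consecProd t ((List.finRange (m + 1)).map σ)
      = ∏ a, (t a - x)⁻¹ := by
  intro m
  induction m with
  | zero =>
    intro t ht x hx
    rw [Fintype.sum_subsingleton _ (1 : Equiv.Perm (Fin 1))]
    simp [List.finRange, consecProd_singleton]
  | succ m ih =>
    intro t ht x hx
    rw [← Equiv.sum_comp (Equiv.Perm.decomposeFin.symm)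
      (fun τ : Equiv.Perm (Fin (m + 2)) =>
        (t (τ 0) - x)⁻¹ * consecProd t ((List.finRange (m + 2)).map τ)),
      Fintype.sum_prod_type]
    have : ∀ p : Fin (m + 2),
        ∑ σ : Equiv.Perm (Fin (m + 1)),
          (t (Equiv.Perm.decomposeFin.symm (p, σ) 0) - x)⁻¹
            * consecProd t ((List.finRange (m + 2)).map (Equiv.Perm.decomposeFin.symm (p, σ)))
          = (t p - x)⁻¹ * ∏ b ∈ Finset.univ.erase p, (t b - t p)⁻¹ := by
      intro p
      rw [← step_sum t ht ih p, mul_sum]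
      exact Finset.sum_congr rfl fun σ _ => by
        rw [Equiv.Perm.decomposeFin_symm_apply_zero]
    rw [Finset.sum_congr rfl fun p _ => this p]
    exact lagA Finset.univ t (ht.injOn) univ_nonempty x (fun i _ => hx i)

end Main

/-- For `n ≥ 1` and pairwise distinct `t_1,...,t_n` in a field, the sum over all
permutations `(i_1,...,i_n)` of `{1,...,n}` of
`1/((t_{i_2}-t_{i_1})(t_{i_3}-t_{i_2})⋯(t_{i_n}-t_{i_{n-1}}))` equals `0` when `n ≥ 2`
and `1` when `n = 1`. -/
theorem stmt16 {K : Type*} [Field K] (n : ℕ) (hn : 1 ≤ n) (t : Fin n → K)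
    (ht : Function.Injective t) :
    ∑ σ : Equiv.Perm (Fin n), consecProd t ((List.finRange n).map σ) =
      if n = 1 then 1 else 0 := by
  match n, hn with
  | 1, _ =>
    rw [if_pos rfl, Fintype.sum_subsingleton _ (1 : Equiv.Perm (Fin 1))]
    simp [List.finRange, consecProd_singleton]
  | (m + 2), _ =>
    rw [if_neg (by omega)]
    rw [← Equiv.sum_comp (Equiv.Perm.decomposeFin.symm)
      (fun τ : Equiv.Perm (Fin (m + 2)) => consecProd t ((List.finRange (m + 2)).map τ)),
      Fintype.sum_prod_type]
    rw [Finset.sum_congr rfl fun p _ => step_sum t ht (keyG m) p]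
    exact lagB Finset.univ t (ht.injOn) (by simp)
end
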